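/- arXiv:2409.20518 — 6 statements merged into one kernel-verified Lean document; each statement's English description precedes it below -/
import Mathlib

section
/- For each unbounded 𝔭-tower T ⊆ [ℕ]^∞, the subspace T ∪ Fin of the Cantor space 𝒫(ℕ) is an ω-γ set: every open ω-cover of T ∪ Fin has a subfamily that is a point-cofinite cover of T ∪ Fin. -/
open Set Filter Cardinal

namespace OmissionOfIntervals

/-- The Cantor space `𝒫(ℕ)`, identified with `ℕ → Bool` via characteristic functions,
with the product topology. -/
abbrev CantorSp : Type := ℕ → Bool

/-- `Fin`: the points of the Cantor space coding finite subsets of `ℕ`. -/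
def CFin : Set CantorSp := {x | {n | x n = true}.Finite}

/-- `[ℕ]^∞`: the points of the Cantor space coding infinite subsets of `ℕ`. -/
def CInf : Set CantorSp := {x | {n | x n = true}.Infinite}

/-- Increasing enumeration of the subset of `ℕ` coded by `x`. -/
noncomputable def enum (x : CantorSp) : ℕ → ℕ := Nat.nth (fun n => x n = true)

/-- `f ≤* g`: `f n ≤ g n` for all but finitely many `n`. -/
def LeStar (f g : ℕ → ℕ) : Prop := ∀ᶠ n in atTop, f n ≤ g n

/-- `a ⊆* b`: the set coded by `a` is almost contained in the set coded by `b`. -/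
def SubStar (a b : CantorSp) : Prop := {n | a n = true ∧ ¬ b n = true}.Finite

/-- A dominating family in the Baire space. -/
def Dominating (S : Set (ℕ → ℕ)) : Prop := ∀ f : ℕ → ℕ, ∃ s ∈ S, LeStar f s

/-- An unbounded (with respect to `≤*`) family in the Baire space. -/
def UnboundedFam (S : Set (ℕ → ℕ)) : Prop := ¬ ∃ g : ℕ → ℕ, ∀ s ∈ S, LeStar s g

/-- The dominating number `𝔡`. -/
noncomputable def frd : Cardinal := sInf {c | ∃ S : Set (ℕ → ℕ), Dominating S ∧ #S = c}

/-- The bounding number `𝔟`. -/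
noncomputable def frb : Cardinal := sInf {c | ∃ S : Set (ℕ → ℕ), UnboundedFam S ∧ #S = c}

/-- A centered family of infinite subsets of `ℕ`: every finite subfamily has infinite
intersection. -/
def Centered (S : Set CantorSp) : Prop :=
  S ⊆ CInf ∧ ∀ F : Finset CantorSp, ↑F ⊆ S → {n | ∀ x ∈ F, x n = true}.Infinite

/-- `S` has a pseudointersection: an infinite set almost contained in every member of `S`. -/
def HasPseudointersection (S : Set CantorSp) : Prop := ∃ a ∈ CInf, ∀ s ∈ S, SubStar a s

/-- The pseudointersection number `𝔭`. -/
noncomputable def frp : Cardinal :=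
  sInf {c | ∃ S : Set CantorSp, Centered S ∧ ¬ HasPseudointersection S ∧ #S = c}

/-- `S ⊆ [ℕ]^∞` is `κ`-unbounded: `|S| ≥ κ` and for every `b : ℕ → ℕ` only `< κ` many
members of `S` satisfy `s(n) ≤ b(n)` for all `n` (via increasing enumerations). -/
def KappaUnbounded (κ : Cardinal) (S : Set CantorSp) : Prop :=
  κ ≤ #S ∧ ∀ b : ℕ → ℕ, #{s ∈ S | ∀ n, enum s n ≤ b n} < κ

/-- `X` is `κ`-concentrated on `CFin`: `|X| ≥ κ` and `|X ∖ U| < κ` for every open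
`U ⊇ CFin`. -/
def KappaConcentrated (κ : Cardinal) (X : Set CantorSp) : Prop :=
  κ ≤ #X ∧ ∀ U : Set CantorSp, IsOpen U → CFin ⊆ U → #(X \ U : Set CantorSp) < κ

/-- An open cover of the space `X`. -/
def IsOpenCover {X : Type*} [TopologicalSpace X] (𝒰 : Set (Set X)) : Prop :=
  (∀ U ∈ 𝒰, IsOpen U) ∧ ⋃₀ 𝒰 = Set.univ

/-- A point-cofinite (γ-) open cover of the space `X`: an infinite family of open sets such
that every point belongs to all but finitely many members. -/
def PointCofiniteCover {X : Type*} [TopologicalSpace X] (𝒰 : Set (Set X)) : Prop :=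
  (∀ U ∈ 𝒰, IsOpen U) ∧ 𝒰.Infinite ∧ ∀ x : X, {U ∈ 𝒰 | x ∉ U}.Finite

/-- An ω-cover of the space `X`: no member contains all of `X`, and every finite subset of
`X` is contained in some member. -/
def OmegaCover {X : Type*} [TopologicalSpace X] (𝒰 : Set (Set X)) : Prop :=
  (∀ U ∈ 𝒰, IsOpen U) ∧ (∀ U ∈ 𝒰, U ≠ Set.univ) ∧ ∀ F : Finset X, ∃ U ∈ 𝒰, ↑F ⊆ U

/-- An ω-cover of the subset `Y` by open subsets of the ambient space `X`. -/
def OmegaCoverOf {X : Type*} [TopologicalSpace X] (𝒰 : Set (Set X)) (Y : Set X) : Prop :=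
  (∀ U ∈ 𝒰, IsOpen U) ∧ (∀ U ∈ 𝒰, ¬ Y ⊆ U) ∧ ∀ F : Finset X, ↑F ⊆ Y → ∃ U ∈ 𝒰, ↑F ⊆ U

/-- The Menger property. -/
def Menger (X : Type*) [TopologicalSpace X] : Prop :=
  ∀ 𝒰 : ℕ → Set (Set X), (∀ n, IsOpenCover (𝒰 n)) →
    ∃ 𝓕 : ℕ → Set (Set X), (∀ n, 𝓕 n ⊆ 𝒰 n ∧ (𝓕 n).Finite) ∧ ⋃₀ (⋃ n, 𝓕 n) = Set.univ

/-- The Hurewicz property. -/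
def Hurewicz (X : Type*) [TopologicalSpace X] : Prop :=
  ∀ 𝒰 : ℕ → Set (Set X), (∀ n, IsOpenCover (𝒰 n)) →
    (∀ n, ¬ ∃ 𝓕 ⊆ 𝒰 n, 𝓕.Finite ∧ ⋃₀ 𝓕 = Set.univ) →
    ∃ 𝓕 : ℕ → Set (Set X), (∀ n, 𝓕 n ⊆ 𝒰 n ∧ (𝓕 n).Finite) ∧
      ∀ x : X, ∀ᶠ n in atTop, x ∈ ⋃₀ 𝓕 n

/-- The property `S1(Γ,Γ)`. -/
def S1GammaGamma (X : Type*) [TopologicalSpace X] : Prop :=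
  ∀ 𝒰 : ℕ → Set (Set X), (∀ n, PointCofiniteCover (𝒰 n)) →
    ∃ U : ℕ → Set X, (∀ n, U n ∈ 𝒰 n) ∧ ∀ x : X, ∀ᶠ n in atTop, x ∈ U n

/-- The property `S1(Γ,O)`. -/
def S1GammaO (X : Type*) [TopologicalSpace X] : Prop :=
  ∀ 𝒰 : ℕ → Set (Set X), (∀ n, PointCofiniteCover (𝒰 n)) →
    ∃ U : ℕ → Set X, (∀ n, U n ∈ 𝒰 n) ∧ (⋃ n, U n) = Set.univ

/-- The property `S1(Ω,Γ)`. -/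
def S1OmegaGamma (X : Type*) [TopologicalSpace X] : Prop :=
  ∀ 𝒰 : ℕ → Set (Set X), (∀ n, OmegaCover (𝒰 n)) →
    ∃ U : ℕ → Set X, (∀ n, U n ∈ 𝒰 n) ∧ ∀ x : X, ∀ᶠ n in atTop, x ∈ U n

/-- `X` is an ω-γ set: every open ω-cover has a subfamily that is a point-cofinite cover. -/
def OmegaGammaSet (X : Type*) [TopologicalSpace X] : Prop :=
  ∀ 𝒰 : Set (Set X), OmegaCover 𝒰 → ∃ 𝒱 ⊆ 𝒰, PointCofiniteCover 𝒱

/-- The property `U_k(Γ,Γ)`. -/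
def UkGammaGamma (k : ℕ) (X : Type*) [TopologicalSpace X] : Prop :=
  ∀ 𝒰 : ℕ → Set (Set X), (∀ n, PointCofiniteCover (𝒰 n)) →
    (∀ n, ¬ ∃ 𝓕 : Finset (Set X), ↑𝓕 ⊆ 𝒰 n ∧ 𝓕.card ≤ k ∧ ⋃₀ (↑𝓕 : Set (Set X)) = Set.univ) →
    ∃ 𝓕 : ℕ → Finset (Set X), (∀ n, ↑(𝓕 n) ⊆ 𝒰 n ∧ (𝓕 n).card ≤ k) ∧
      ∀ x : X, ∀ᶠ n in atTop, x ∈ ⋃₀ ((𝓕 n : Finset (Set X)) : Set (Set X))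

/-- The property `U_id(Γ,Γ)`. -/
def UidGammaGamma (X : Type*) [TopologicalSpace X] : Prop :=
  ∀ 𝒰 : ℕ → Set (Set X), (∀ n, PointCofiniteCover (𝒰 n)) →
    (∀ n, ¬ ∃ 𝓕 : Finset (Set X), ↑𝓕 ⊆ 𝒰 n ∧ ⋃₀ (↑𝓕 : Set (Set X)) = Set.univ) →
    ∃ 𝓕 : ℕ → Finset (Set X), (∀ n, ↑(𝓕 n) ⊆ 𝒰 n ∧ (𝓕 n).card ≤ n) ∧
      ∀ x : X, ∀ᶠ n in atTop, x ∈ ⋃₀ ((𝓕 n : Finset (Set X)) : Set (Set X))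

/-- The set of terms of an ordinal-indexed sequence, below the ordinal `o`. -/
def rangeBelow (s : Ordinal → CantorSp) (o : Ordinal) : Set CantorSp := {x | ∃ α < o, x = s α}

/-- `s`, restricted to ordinals below `frb.ord`, is a `𝔟`-scale: an unbounded,
`≤*`-increasing `𝔟`-sequence of infinite subsets of `ℕ`. -/
def IsBScale (s : Ordinal → CantorSp) : Prop :=
  (∀ α < frb.ord, s α ∈ CInf) ∧
  UnboundedFam {f | ∃ α < frb.ord, f = enum (s α)} ∧
  ∀ α β : Ordinal, α < β → β < frb.ord → LeStar (enum (s α)) (enum (s β))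

/-- `t`, restricted to ordinals below `κ.ord`, is a `κ`-tower:
`⊆*`-decreasing sequence of infinite subsets of `ℕ`. -/
def IsTower (κ : Cardinal) (t : Ordinal → CantorSp) : Prop :=
  (∀ α < κ.ord, t α ∈ CInf) ∧
  ∀ α β : Ordinal, α < β → β < κ.ord → SubStar (t β) (t α)

/-- An unbounded `κ`-tower. -/
def IsUnboundedTower (κ : Cardinal) (t : Ordinal → CantorSp) : Prop :=
  IsTower κ t ∧ UnboundedFam {f | ∃ α < κ.ord, f = enum (t α)}

/-- `a ⊑ b`: for all but finitely many `n`, the interval `[b(n), b(n+1)]` contains at least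
two elements of the set coded by `a`. -/
def SqSubset (a b : CantorSp) : Prop :=
  ∀ᶠ n in atTop,
    2 ≤ ((Finset.Icc (enum b n) (enum b (n + 1))).filter (fun k => a k = true)).card

/-- `s`, restricted to ordinals below `frb.ord`, is a `𝔟(⊑)`-scale. -/
def IsBSqScale (s : Ordinal → CantorSp) : Prop :=
  (∀ α < frb.ord, s α ∈ CInf) ∧
  UnboundedFam {f | ∃ α < frb.ord, f = enum (s α)} ∧
  ∀ α β : Ordinal, α < β → β < frb.ord → SqSubset (s α) (s β)

/-! ### Section 1 : generic lemmas -/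

lemma leStar_trans {f g h : ℕ → ℕ} (h1 : LeStar f g) (h2 : LeStar g h) : LeStar f h := by
  filter_upwards [h1, h2] with n hn1 hn2; omega

/-- monotonization of a function -/
def gmono (g : ℕ → ℕ) : ℕ → ℕ := fun n => (Finset.range (n+1)).sup g

lemma le_gmono (g : ℕ → ℕ) (n : ℕ) : g n ≤ gmono g n :=
  Finset.le_sup (by simp)

lemma gmono_mono (g : ℕ → ℕ) : Monotone (gmono g) := by
  intro a b hab
  exact Finset.sup_mono (Finset.range_subset_range.2 (by omega))

lemma countable_bounded (F : Set (ℕ → ℕ)) (hF : F.Countable) :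
    ∃ g : ℕ → ℕ, ∀ f ∈ F, LeStar f g := by
  rcases F.eq_empty_or_nonempty with h | h
  · exact ⟨id, by simp [h]⟩
  · obtain ⟨u, hu⟩ := hF.exists_eq_range h
    refine ⟨fun n => (Finset.range (n+1)).sup (fun k => u k n), ?_⟩
    rintro f hf
    rw [hu] at hf
    obtain ⟨k, rfl⟩ := hf
    rw [LeStar, eventually_atTop]
    exact ⟨k, fun n hn => Finset.le_sup (f := fun k => u k n) (by simp; omega)⟩

lemma nth_compare {u v : ℕ → Prop} (hu : (setOf u).Infinite) (hv : (setOf v).Infinite)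
    (N : ℕ) (h : ∀ k, u k → N ≤ k → v k) (n : ℕ) : Nat.nth v n ≤ Nat.nth u (n + N) := by
  classical
  set m := Nat.nth u (n + N) with hm
  have hum : u m := Nat.nth_mem_of_infinite hu _
  have hcount : Nat.count u (m + 1) = n + N + 1 := by
    rw [Nat.count_succ, if_pos hum, Nat.count_nth_of_infinite hu]
  have hcv : n < Nat.count v (m + 1) := by
    rw [Nat.count_eq_card_filter_range] at hcount ⊢
    have hsub : (Finset.range (m+1)).filter (fun x => u x) ⊆
        ((Finset.range (m+1)).filter (fun x => v x)) ∪ Finset.range N := by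
      intro a ha
      simp only [Finset.mem_filter, Finset.mem_range, Finset.mem_union] at ha ⊢
      rcases lt_or_ge a N with hc | hc
      · exact Or.inr hc
      · exact Or.inl ⟨ha.1, h a ha.2 hc⟩
    have h1 := Finset.card_le_card hsub
    have h2 := Finset.card_union_le ((Finset.range (m+1)).filter (fun x => v x))
      (Finset.range N)
    simp only [Finset.card_range] at h2
    omega
  have := (Nat.lt_nth_iff_count_lt hv).1 hcv
  omega

lemma le_iterate {G : ℕ → ℕ} (hG : ∀ x, x + 1 ≤ G x) : ∀ (k x : ℕ), x ≤ G^[k] x := by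
  intro k
  induction k with
  | zero => simp
  | succ k ih =>
    intro x
    rw [Function.iterate_succ_apply]
    calc x ≤ x + 1 := by omega
    _ ≤ G x := hG x
    _ ≤ G^[k] (G x) := ih (G x)

def gstep (g : ℕ → ℕ) : ℕ → ℕ := fun x => max (gmono g (x+1)) (x+1)

lemma gstep_mono (g : ℕ → ℕ) : Monotone (gstep g) := by
  intro a b hab
  exact max_le_max (gmono_mono g (by omega)) (by omega)

lemma gstep_succ_le (g : ℕ → ℕ) (x : ℕ) : x + 1 ≤ gstep g x := le_max_right _ _

/-- The function witnessing "no infinitely many gaps implies domination". -/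
def hFn (g : ℕ → ℕ) : ℕ → ℕ := fun n => (gstep g)^[n] n

/-- If `enum x` is not eventually dominated by `hFn g`, then there are infinitely
many `M` such that `x` omits the interval `[M, g M)`. -/
lemma gaps_infinite {x : CantorSp} (hx : x ∈ CInf) {g : ℕ → ℕ}
    (h : ¬ LeStar (enum x) (hFn g)) :
    {M : ℕ | ∀ k, x k = true → M ≤ k → ¬ k < g M}.Infinite := by
  classical
  set p : ℕ → Prop := fun n => x n = true with hp
  have hpi : (setOf p).Infinite := hx
  by_contra hfin
  rw [Set.not_infinite] at hfin
  apply h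
  obtain ⟨M₀, hM₀⟩ : ∃ M₀, ∀ M ∈ {M : ℕ | ∀ k, x k = true → M ≤ k → ¬ k < g M}, M < M₀ := by
    obtain ⟨b, hb⟩ := hfin.bddAbove
    exact ⟨b + 1, fun M hM => by have := hb hM; omega⟩
  -- every M ≥ M₀ has a point of x in [M, g M)
  have hstep : ∀ n, M₀ ≤ enum x n + 1 → enum x (n+1) < gstep g (enum x n) := by
    intro n hn
    have : ¬ (enum x n + 1) ∈ {M : ℕ | ∀ k, x k = true → M ≤ k → ¬ k < g M} := by
      intro hmem; have := hM₀ _ hmem; omega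
    simp only [Set.mem_setOf_eq] at this
    push_neg at this
    obtain ⟨k, hk1, hk2, hk3⟩ := this
    -- k is some enum value beyond n
    have hk4 : Nat.nth p (Nat.count p k) = k := Nat.nth_count hk1
    have hlt : enum x n < k := by omega
    have hj : n < Nat.count p k := by
      have := (Nat.nth_lt_nth hpi (k := n) (n := Nat.count p k)).1 (by rw [hk4]; exact hlt)
      exact this
    have : enum x (n+1) ≤ k := by
      have hmono := (Nat.nth_strictMono hpi).monotone (show n + 1 ≤ Nat.count p k by omega)
      rw [hk4] at hmono
      exact hmono
    calc enum x (n+1) ≤ k := this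
    _ < g (enum x n + 1) := hk3
    _ ≤ gmono g (enum x n + 1) := le_gmono _ _
    _ ≤ gstep g (enum x n) := le_max_left _ _
  have hen : ∀ n, n ≤ enum x n := fun n => (Nat.nth_strictMono hpi).le_apply
  have hind : ∀ j, enum x (M₀ + j) ≤ (gstep g)^[j] (enum x M₀) := by
    intro j
    induction j with
    | zero => simp
    | succ j ih =>
      have h1 : enum x (M₀ + j + 1) < gstep g (enum x (M₀ + j)) := by
        apply hstep
        have := hen (M₀ + j); omega
      have h2 : gstep g (enum x (M₀ + j)) ≤ gstep g ((gstep g)^[j] (enum x M₀)) :=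
        gstep_mono g ih
      rw [Function.iterate_succ_apply']
      show enum x (M₀ + j + 1) ≤ _
      omega
  rw [LeStar, eventually_atTop]
  refine ⟨max M₀ (enum x M₀), fun n hn => ?_⟩
  have hn1 : M₀ ≤ n := le_trans (le_max_left _ _) hn
  have hn2 : enum x M₀ ≤ n := le_trans (le_max_right _ _) hn
  obtain ⟨j, rfl⟩ : ∃ j, n = M₀ + j := ⟨n - M₀, by omega⟩
  calc enum x (M₀ + j) ≤ (gstep g)^[j] (enum x M₀) := hind j
  _ ≤ (gstep g)^[j] ((gstep g)^[M₀] (M₀ + j)) := by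
      apply (gstep_mono g).iterate j
      exact le_trans hn2 (le_iterate (gstep_succ_le g) M₀ (M₀ + j))
  _ = (gstep g)^[j + M₀] (M₀ + j) := (Function.iterate_add_apply _ j M₀ _).symm
  _ = hFn g (M₀ + j) := by rw [hFn]; congr 1; omega


/-! ### Section 2 : pseudointersection machinery -/

lemma pseudo_of_lt {S : Set CantorSp} (hc : Centered S) (hlt : #S < frp) :
    HasPseudointersection S := by
  by_contra h
  exact absurd hlt (not_lt.2 (csInf_le' ⟨S, hc, h, rfl⟩))

def mkA (g : ℕ → ℕ) : CantorSp := fun p => decide (g (Nat.unpair p).1 ≤ (Nat.unpair p).2)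
def mkD (k : ℕ) : CantorSp := fun p => decide (k ≤ (Nat.unpair p).1)

lemma bounded_of_mk_lt (hale : ℵ₀ < frp) (F : Set (ℕ → ℕ)) (hF : #F < frp) :
    ∃ g : ℕ → ℕ, ∀ f ∈ F, LeStar f g := by
  classical
  set 𝒮 : Set CantorSp := (mkA '' (gmono '' F)) ∪ Set.range mkD with h𝒮
  have hcent : Centered 𝒮 := by
    constructor
    · rintro y (⟨g, ⟨f, hf, rfl⟩, rfl⟩ | ⟨k, rfl⟩)
      · apply Set.infinite_of_injective_forall_mem
          (f := fun n => Nat.pair n (gmono f n))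
        · intro n m hnm
          simpa using (Nat.pair_eq_pair.1 hnm).1
        · intro n
          simp [mkA, Nat.unpair_pair]
      · apply Set.infinite_of_injective_forall_mem (f := fun n => Nat.pair (n + k) 0)
        · intro n m hnm
          have := (Nat.pair_eq_pair.1 hnm).1; omega
        · intro n
          simp [mkD, Nat.unpair_pair]
    · intro Fs hFs
      have hpickA : ∀ y ∈ Fs, ∀ hA : ∃ g : ℕ → ℕ, Monotone g ∧ y = mkA g, True := fun _ _ _ => trivial
      set pickA : CantorSp → (ℕ → ℕ) := fun y =>
        if h : ∃ g : ℕ → ℕ, Monotone g ∧ y = mkA g then h.choose else fun _ => 0 with hpA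
      set pickD : CantorSp → ℕ := fun y => if h : ∃ k, y = mkD k then h.choose else 0 with hpD
      set K := Fs.sup pickD with hK
      set Mf : ℕ → ℕ := fun n => Fs.sup (fun y => pickA y n) with hMf
      apply Set.infinite_of_injective_forall_mem
        (f := fun j => Nat.pair (j + K) (Mf (j + K)))
      · intro n m hnm
        have := (Nat.pair_eq_pair.1 hnm).1; omega
      · intro j
        simp only [Set.mem_setOf_eq]
        intro y hy
        rcases hFs hy with ⟨g, ⟨f, hf, rfl⟩, rfl⟩ | ⟨k, rfl⟩
        · have hA : ∃ g : ℕ → ℕ, Monotone g ∧ mkA (gmono f) = mkA g :=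
            ⟨gmono f, gmono_mono f, rfl⟩
          obtain ⟨hmono, heq⟩ := hA.choose_spec
          rw [heq]
          simp only [mkA, Nat.unpair_pair, decide_eq_true_eq]
          have h1 : hA.choose (j + K) ≤ Mf (j + K) := by
            have h2 : pickA (mkA (gmono f)) (j + K) ≤ Mf (j + K) :=
              Finset.le_sup (f := fun y => pickA y (j + K)) hy
            rw [hpA] at h2
            simpa [dif_pos hA] using h2
          exact le_trans (le_of_eq rfl) h1
        · have hD : ∃ k', mkD k = mkD k' := ⟨k, rfl⟩
          have heq := hD.choose_spec
          rw [heq]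
          simp only [mkD, Nat.unpair_pair, decide_eq_true_eq]
          have h2 : pickD (mkD k) ≤ K := Finset.le_sup hy
          rw [hpD] at h2
          simp only [dif_pos hD] at h2
          omega
  have hcard : #𝒮 < frp := by
    apply lt_of_le_of_lt (Cardinal.mk_union_le _ _)
    apply Cardinal.add_lt_of_lt (le_of_lt hale)
    · exact lt_of_le_of_lt (le_trans Cardinal.mk_image_le Cardinal.mk_image_le) hF
    · exact lt_of_le_of_lt Cardinal.mk_range_le (by simpa using hale)
  obtain ⟨a, haI, hsub⟩ := pseudo_of_lt hcent hcard
  set p : ℕ → Prop := fun n => a n = true with hp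
  have hpI : (setOf p).Infinite := haI
  have hnthmem : ∀ j, a (Nat.nth p j) = true := fun j => Nat.nth_mem_of_infinite hpI j
  have hfin1 : ∀ n : ℕ, {j : ℕ | (Nat.unpair (Nat.nth p j)).1 < n}.Finite := by
    intro n
    have h1 : {q : ℕ | a q = true ∧ ¬ (mkD n q = true)}.Finite :=
      hsub (mkD n) (Or.inr ⟨n, rfl⟩)
    have h2 : {j : ℕ | (Nat.unpair (Nat.nth p j)).1 < n} ⊆
        Nat.nth p ⁻¹' {q : ℕ | a q = true ∧ ¬ (mkD n q = true)} := by
      intro j hj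
      simp only [Set.mem_setOf_eq] at hj
      simp only [Set.mem_preimage, Set.mem_setOf_eq]
      refine ⟨hnthmem j, ?_⟩
      simp only [mkD, decide_eq_true_eq]
      omega
    exact (h1.preimage ((Nat.nth_injective hpI).injOn)).subset h2
  have hjex : ∀ n : ℕ, ∃ j, n ≤ j ∧ n ≤ (Nat.unpair (Nat.nth p j)).1 := by
    intro n
    obtain ⟨b, hb⟩ := (hfin1 n).bddAbove
    refine ⟨max n (b+1), le_max_left _ _, ?_⟩
    by_contra hcon
    push_neg at hcon
    have : max n (b+1) ≤ b := hb hcon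
    omega
  set jfun : ℕ → ℕ := fun n => Nat.find (hjex n) with hjfun
  refine ⟨fun n => (Nat.unpair (Nat.nth p (jfun n))).2, ?_⟩
  intro f hf
  have hyA : mkA (gmono f) ∈ 𝒮 := Or.inl ⟨gmono f, ⟨f, hf, rfl⟩, rfl⟩
  have hbadf : {j : ℕ | ¬ (mkA (gmono f) (Nat.nth p j) = true)}.Finite := by
    have h1 := hsub _ hyA
    have h2 : {j : ℕ | ¬ (mkA (gmono f) (Nat.nth p j) = true)} ⊆
        Nat.nth p ⁻¹' {q : ℕ | a q = true ∧ ¬ (mkA (gmono f) q = true)} := by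
      intro j hj
      exact ⟨hnthmem j, hj⟩
    exact (h1.preimage ((Nat.nth_injective hpI).injOn)).subset h2
  obtain ⟨b, hb⟩ := hbadf.bddAbove
  rw [LeStar, eventually_atTop]
  refine ⟨b + 1, fun n hn => ?_⟩
  have hspec := Nat.find_spec (hjex n)
  have hjn : n ≤ jfun n := hspec.1
  have hgood : mkA (gmono f) (Nat.nth p (jfun n)) = true := by
    by_contra hcon
    have : jfun n ≤ b := hb hcon
    omega
  simp only [mkA, decide_eq_true_eq] at hgood
  calc f n ≤ gmono f n := le_gmono f n
  _ ≤ gmono f (Nat.unpair (Nat.nth p (jfun n))).1 := gmono_mono f hspec.2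
  _ ≤ (Nat.unpair (Nat.nth p (jfun n))).2 := hgood


/-! ### Section 3 : tower lemmas -/

lemma mk_range_le_ordinal {β : Type} (o : Ordinal.{0}) (f : ↥(Set.Iio o) → β) :
    #(Set.range f) ≤ o.card := by
  have h := Cardinal.mk_range_le_lift (f := f)
  rw [Ordinal.mk_Iio_ordinal] at h
  have h2 : Cardinal.lift.{1,0} #(Set.range f) ≤ Cardinal.lift.{1,0} o.card := by
    simpa [← Ordinal.lift_card] using h
  exact Cardinal.lift_le.mp h2

section Tower

variable {t : Ordinal → CantorSp}

lemma aleph0_lt_frp (ht : IsUnboundedTower frp t) : ℵ₀ < frp := by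
  by_contra hh
  rw [not_lt] at hh
  have hcnt : Countable ↥(Set.Iio frp.ord) := by
    rw [← Cardinal.mk_le_aleph0_iff, Ordinal.mk_Iio_ordinal, Cardinal.card_ord]
    calc Cardinal.lift.{1,0} frp ≤ Cardinal.lift.{1,0} ℵ₀ := Cardinal.lift_le.2 hh
    _ = ℵ₀ := by simp
  have hsub : {f | ∃ α < frp.ord, f = enum (t α)} ⊆
      Set.range (fun a : ↥(Set.Iio frp.ord) => enum (t a.1)) := by
    rintro f ⟨α, hα, rfl⟩
    exact ⟨⟨α, hα⟩, rfl⟩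
  obtain ⟨g, hg⟩ := countable_bounded _ ((Set.countable_range _).mono hsub)
  exact ht.2 ⟨g, hg⟩

lemma exists_tail_escape (ht : IsUnboundedTower frp t) (H : ℕ → ℕ) :
    ∃ δ, δ < frp.ord ∧ ∀ α, δ ≤ α → α < frp.ord → ¬ LeStar (enum (t α)) H := by
  by_contra hcon
  push_neg at hcon
  apply ht.2
  refine ⟨fun n => gmono H (2*n), ?_⟩
  rintro f ⟨ξ, hξ, rfl⟩
  obtain ⟨α, hle, hα, hLe⟩ := hcon ξ hξ
  rcases eq_or_lt_of_le hle with rfl | hlt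
  · filter_upwards [hLe] with n hn
    calc enum (t ξ) n ≤ H n := hn
    _ ≤ gmono H n := le_gmono H n
    _ ≤ gmono H (2*n) := gmono_mono H (by omega)
  · have hfin : {n | t α n = true ∧ ¬ t ξ n = true}.Finite := ht.1.2 ξ α hlt hα
    obtain ⟨b, hb⟩ := hfin.bddAbove
    have hN : ∀ k, t α k = true → b + 1 ≤ k → t ξ k = true := by
      intro k hk1 hk2
      by_contra hk3
      have : k ≤ b := hb ⟨hk1, hk3⟩
      omega
    have hcmp : ∀ n, enum (t ξ) n ≤ enum (t α) (n + (b+1)) :=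
      nth_compare (ht.1.1 α hα) (ht.1.1 ξ hξ) (b+1) hN
    rw [LeStar, eventually_atTop] at hLe ⊢
    obtain ⟨a₀, ha₀⟩ := hLe
    refine ⟨max a₀ (b+1), fun n hn => ?_⟩
    have h1 : a₀ ≤ n := le_trans (le_max_left _ _) hn
    have h2 : b + 1 ≤ n := le_trans (le_max_right _ _) hn
    calc enum (t ξ) n ≤ enum (t α) (n + (b+1)) := hcmp n
    _ ≤ H (n + (b+1)) := ha₀ _ (by omega)
    _ ≤ gmono H (n + (b+1)) := le_gmono _ _
    _ ≤ gmono H (2*n) := gmono_mono H (by omega)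

lemma exists_bound_forall_le (ht : IsUnboundedTower frp t)
    (δ : Ordinal → Ordinal) (hδ : ∀ β, δ β < frp.ord)
    (ξ : Ordinal) (hξ : ξ < frp.ord) :
    ∃ η, η < frp.ord ∧ ∀ β ≤ ξ, δ β ≤ η := by
  have hale := aleph0_lt_frp ht
  by_contra hcon
  push_neg at hcon
  have hch : ∀ b : ↥(Set.Iio (Order.succ ξ)), ∃ g, ∀ f ∈
      Set.range (fun a : ↥(Set.Iio (δ b.1)) => enum (t a.1)), LeStar f g := by
    intro b
    apply bounded_of_mk_lt hale
    exact lt_of_le_of_lt (mk_range_le_ordinal _ _) (Cardinal.lt_ord.1 (hδ b.1))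
  choose gch hgch using hch
  have hG2 : #(Set.range gch) < frp := by
    apply lt_of_le_of_lt (mk_range_le_ordinal _ _)
    rw [Ordinal.card_succ]
    exact Cardinal.add_lt_of_lt hale.le (Cardinal.lt_ord.1 hξ)
      (lt_trans Cardinal.one_lt_aleph0 hale)
  obtain ⟨g₂, hg₂⟩ := bounded_of_mk_lt hale _ hG2
  apply ht.2
  refine ⟨g₂, ?_⟩
  rintro f ⟨α, hα, rfl⟩
  obtain ⟨β, hβξ, hβ'⟩ := hcon α hα
  set b : ↥(Set.Iio (Order.succ ξ)) := ⟨β, by simpa [Order.lt_succ_iff] using hβξ⟩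
  have h1 : LeStar (enum (t α)) (gch b) := hgch b _ ⟨⟨α, hβ'⟩, rfl⟩
  exact leStar_trans h1 (hg₂ _ ⟨b, rfl⟩)

lemma exists_alpha0 (ht : IsUnboundedTower frp t) (Hc : Ordinal → (ℕ → ℕ)) :
    ∃ α₀, 0 < α₀ ∧ α₀ < frp.ord ∧ ∀ β < α₀, ¬ LeStar (enum (t α₀)) (Hc β) := by
  have hale := aleph0_lt_frp ht
  have hlim : Order.IsSuccLimit frp.ord := Cardinal.isSuccLimit_ord hale.le
  have hzero : (0 : Ordinal) < frp.ord := by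
    rw [Cardinal.lt_ord, Ordinal.card_zero]
    exact lt_trans (by simp [Cardinal.aleph0_pos]) hale
  have hδex : ∀ β, ∃ δ, δ < frp.ord ∧
      ∀ α, δ ≤ α → α < frp.ord → ¬ LeStar (enum (t α)) (Hc β) :=
    fun β => exists_tail_escape ht (Hc β)
  choose δf hδ1 hδ2 using hδex
  have hηex : ∀ ξ, ξ < frp.ord → ∃ η, η < frp.ord ∧ ∀ β ≤ ξ, δf β ≤ η :=
    fun ξ hξ => exists_bound_forall_le ht δf hδ1 ξ hξ
  set ηf : Ordinal → Ordinal := fun ξ =>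
    if h : ξ < frp.ord then (hηex ξ h).choose else 0 with hηf
  have hηf1 : ∀ ξ, ξ < frp.ord → ηf ξ < frp.ord := by
    intro ξ h
    simp only [hηf, dif_pos h]
    exact (hηex ξ h).choose_spec.1
  have hηf2 : ∀ ξ, ξ < frp.ord → ∀ β ≤ ξ, δf β ≤ ηf ξ := by
    intro ξ h
    simp only [hηf, dif_pos h]
    exact (hηex ξ h).choose_spec.2
  set ξs : ℕ → Ordinal :=
    fun n => Nat.rec 0 (fun _ prev => max (ηf prev) (Order.succ prev)) n with hξs
  have hξsucc : ∀ n, ξs (n+1) = max (ηf (ξs n)) (Order.succ (ξs n)) := fun n => rfl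
  have hξlt : ∀ n, ξs n < frp.ord := by
    intro n
    induction n with
    | zero => exact hzero
    | succ n ih =>
      rw [hξsucc]
      exact max_lt (hηf1 _ ih) (hlim.succ_lt ih)
  have hbdd : BddAbove (Set.range ξs) := Ordinal.bddAbove_range ξs
  set α₀ := iSup ξs with hα₀
  have hltsup : ∀ β, β < α₀ → ∃ n, β < ξs n := fun β hβ => (lt_ciSup_iff hbdd).1 hβ
  have hub : α₀ < frp.ord := by
    by_contra hcon
    rw [not_lt] at hcon
    have hex : ∀ α, α < frp.ord → ∃ n, α < ξs n :=
      fun α hα => hltsup α (lt_of_lt_of_le hα hcon)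
    have hch : ∀ n : ℕ, ∃ g, ∀ f ∈
        Set.range (fun a : ↥(Set.Iio (ξs n)) => enum (t a.1)), LeStar f g := by
      intro n
      apply bounded_of_mk_lt hale
      exact lt_of_le_of_lt (mk_range_le_ordinal _ _) (Cardinal.lt_ord.1 (hξlt n))
    choose gn hgn using hch
    obtain ⟨g₂, hg₂⟩ := countable_bounded _ (Set.countable_range gn)
    apply ht.2
    refine ⟨g₂, ?_⟩
    rintro f ⟨α, hα, rfl⟩
    obtain ⟨n, hn⟩ := hex α hα
    exact leStar_trans (hgn n _ ⟨⟨α, hn⟩, rfl⟩) (hg₂ _ ⟨n, rfl⟩)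
  refine ⟨α₀, ?_, hub, ?_⟩
  · calc (0 : Ordinal) < Order.succ 0 := by simp
    _ ≤ max (ηf (ξs 0)) (Order.succ (ξs 0)) := le_max_right _ _
    _ = ξs 1 := (hξsucc 0).symm
    _ ≤ α₀ := le_ciSup hbdd 1
  · intro β hβ
    obtain ⟨n, hn⟩ := hltsup β hβ
    have h1 : δf β ≤ ηf (ξs n) := hηf2 _ (hξlt n) β (le_of_lt hn)
    have h2 : ηf (ξs n) ≤ ξs (n+1) := by rw [hξsucc]; exact le_max_left _ _
    exact hδ2 β α₀ (le_trans h1 (le_trans h2 (le_ciSup hbdd (n+1)))) hub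

end Tower


/-! ### Section 4 : cylinders in the Cantor space -/

/-- Codes for clopen cylinder sets. -/
def PP : Type := Σ m : ℕ, Set (Fin m → Bool)

instance : Countable PP := by
  unfold PP; infer_instance

/-- The clopen set coded by `d`. -/
def Cyl (d : PP) : Set CantorSp := {x | (fun i : Fin d.1 => x i.1) ∈ d.2}

lemma cyl_agree {d : PP} {x y : CantorSp} (h : ∀ i, i < d.1 → x i = y i) :
    x ∈ Cyl d ↔ y ∈ Cyl d := by
  have hxy : (fun i : Fin d.1 => x i.1) = (fun i : Fin d.1 => y i.1) :=
    funext (fun i => h i.1 i.2)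
  simp only [Cyl, Set.mem_setOf_eq, hxy]

/-- Characteristic function of a finite set. -/
def chi (w : Finset ℕ) : CantorSp := fun n => decide (n ∈ w)

lemma chi_eq_true_iff (w : Finset ℕ) (n : ℕ) : chi w n = true ↔ n ∈ w := by
  simp [chi]

lemma chi_mem_CFin (w : Finset ℕ) : chi w ∈ CFin := by
  have : {n | chi w n = true} ⊆ ↑w := by
    intro n hn; rwa [Set.mem_setOf_eq, chi_eq_true_iff] at hn
  exact Set.Finite.subset w.finite_toSet this

/-- truncation of a point to a finite set -/
def trunc (x : CantorSp) (m : ℕ) : Finset ℕ := (Finset.range m).filter (fun n => x n = true)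

lemma mem_trunc {x : CantorSp} {m n : ℕ} : n ∈ trunc x m ↔ n < m ∧ x n = true := by
  simp [trunc]

lemma trunc_agree (x : CantorSp) (m : ℕ) : ∀ i, i < m → chi (trunc x m) i = x i := by
  intro i hi
  rcases hx : x i with h | h
  · simp only [chi, decide_eq_false_iff_not, mem_trunc]
    rintro ⟨-, h2⟩; rw [hx] at h2; exact Bool.false_ne_true h2
  · simp only [chi, decide_eq_true_eq, mem_trunc]
    exact ⟨hi, hx⟩

lemma mem_cyl_of_trunc {d : PP} {x : CantorSp} (h : chi (trunc x d.1) ∈ Cyl d) :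
    x ∈ Cyl d := (cyl_agree (fun i hi => (trunc_agree x d.1 i hi))).1 h

lemma trunc_mem_cyl {d : PP} {x : CantorSp} (h : x ∈ Cyl d) :
    chi (trunc x d.1) ∈ Cyl d := (cyl_agree (fun i hi => (trunc_agree x d.1 i hi))).2 h

lemma exists_cyl {V : Set CantorSp} (hV : IsOpen V) {x : CantorSp} (hx : x ∈ V) :
    ∃ m, ∀ y : CantorSp, (∀ i, i < m → y i = x i) → y ∈ V := by
  rw [isOpen_pi_iff] at hV
  obtain ⟨I, u, hIu, hsub⟩ := hV x hx
  refine ⟨I.sup id + 1, fun y hy => hsub ?_⟩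
  intro a ha
  have h1 : a ≤ I.sup id := Finset.le_sup (f := id) ha
  rw [hy a (by omega)]
  exact (hIu a ha).2


/-! ### Section 5 : cover-side definitions -/

/-- pigeonhole: an infinite set mapped into a finite set has an infinite fiber -/
lemma pigeonhole_infinite {α β : Type*} (A : Set α) (f : α → β) (D₀ : Set β)
    (hA : A.Infinite) (hD : D₀.Finite) (hf : ∀ n ∈ A, f n ∈ D₀) :
    ∃ d ∈ D₀, {n | n ∈ A ∧ f n = d}.Infinite := by
  by_contra h
  push_neg at h
  have hsub : A ⊆ ⋃ d ∈ D₀, {n | n ∈ A ∧ f n = d} := fun n hn =>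
    Set.mem_biUnion (hf n hn) ⟨hn, rfl⟩
  have hfin : (⋃ d ∈ D₀, {n | n ∈ A ∧ f n = d}).Finite :=
    hD.biUnion (fun d hd => by
      have h2 := h d hd
      exact h2)
  exact hA (hfin.subset hsub)

/-- initial segments of the tower -/
def Tle (t : Ordinal → CantorSp) (β : Ordinal) : Set CantorSp := {x | ∃ γ, γ ≤ β ∧ x = t γ}

def Tlt (t : Ordinal → CantorSp) (β : Ordinal) : Set CantorSp := {x | ∃ γ, γ < β ∧ x = t γ}

lemma mk_Tle_lt (t : Ordinal → CantorSp) {β : Ordinal} (hβ : β < frp.ord)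
    (hale : ℵ₀ < frp) : #(Tle t β) < frp := by
  have hsub : Tle t β ⊆ Set.range (fun a : ↥(Set.Iio (Order.succ β)) => t a.1) := by
    rintro x ⟨γ, hγ, rfl⟩
    exact ⟨⟨γ, by simpa [Order.lt_succ_iff] using hγ⟩, rfl⟩
  apply lt_of_le_of_lt (Cardinal.mk_le_mk_of_subset hsub)
  apply lt_of_le_of_lt (mk_range_le_ordinal _ _)
  rw [Ordinal.card_succ]
  exact Cardinal.add_lt_of_lt hale.le (Cardinal.lt_ord.1 hβ)
    (lt_trans Cardinal.one_lt_aleph0 hale)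

lemma mk_Tlt_le (t : Ordinal → CantorSp) (β : Ordinal) : #(Tlt t β) ≤ β.card := by
  have hsub : Tlt t β ⊆ Set.range (fun a : ↥(Set.Iio β) => t a.1) := by
    rintro x ⟨γ, hγ, rfl⟩
    exact ⟨⟨γ, hγ⟩, rfl⟩
  exact le_trans (Cardinal.mk_le_mk_of_subset hsub) (mk_range_le_ordinal _ _)

/-- cardinality of families of finsets with elements from a small set -/
lemma mk_finsets_lt {W : Set CantorSp} (hW : #W < frp) (hale : ℵ₀ < frp) :
    #{G : Finset CantorSp | ↑G ⊆ W} < frp := by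
  classical
  rcases finite_or_infinite ↥W with hfin | hinf
  · have hWfin : W.Finite := Set.toFinite W
    have hsub : {G : Finset CantorSp | ↑G ⊆ W} ⊆ ↑(hWfin.toFinset.powerset) := by
      intro G hG
      simp only [Finset.coe_powerset, Set.mem_preimage, Set.mem_powerset_iff]
      intro x hx
      simp only [Finset.coe_sort_coe, Set.Finite.coe_toFinset]
      exact hG hx
    have hfin2 : {G : Finset CantorSp | ↑G ⊆ W}.Finite :=
      (hWfin.toFinset.powerset.finite_toSet).subset hsub
    exact lt_trans hfin2.lt_aleph0 hale
  · have hinj : Function.Injective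
        (fun G : ↥{G : Finset CantorSp | ↑G ⊆ W} => Finset.subtype (· ∈ W) G.1) := by
      intro G1 G2 h
      apply Subtype.ext
      have h1 := congrArg (fun s => Finset.map (Function.Embedding.subtype (· ∈ W)) s) h
      simp only [Finset.subtype_map] at h1
      rwa [Finset.filter_true_of_mem (fun x hx => G1.2 hx),
        Finset.filter_true_of_mem (fun x hx => G2.2 hx)] at h1
    apply lt_of_le_of_lt (Cardinal.mk_le_of_injective hinj)
    rw [Cardinal.mk_finset_of_infinite]
    exact hW


/-! ### Section 6 : the main theorem -/

theorem main_aux (t : Ordinal → CantorSp) (ht : IsUnboundedTower frp t)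
    (S : Set CantorSp) (hS : S = rangeBelow t frp.ord ∪ CFin)
    (𝒰 : Set (Set ↥S)) (h𝒰 : OmegaCover 𝒰) :
    ∃ 𝒱 ⊆ 𝒰, PointCofiniteCover 𝒱 := by
  classical
  have hale : ℵ₀ < frp := aleph0_lt_frp ht
  have hCFinS : CFin ⊆ S := by rw [hS]; exact Set.subset_union_right
  have hrange : ∀ γ, γ < frp.ord → t γ ∈ S := by
    intro γ hγ; rw [hS]; exact Or.inl ⟨γ, hγ, rfl⟩
  have hmemS : ∀ x, x ∈ S → (∃ γ, γ < frp.ord ∧ x = t γ) ∨ x ∈ CFin := by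
    intro x hx; rw [hS] at hx
    rcases hx with h | h
    · obtain ⟨γ, hγ, hxe⟩ := h; exact Or.inl ⟨γ, hγ, hxe⟩
    · exact Or.inr h
  -- the set of usable cylinder codes
  set Dset : Set PP := {d | ∃ U ∈ 𝒰, (Subtype.val ⁻¹' Cyl d : Set ↥S) ⊆ U} with hDset
  set sel : PP → Set ↥S := fun d => if h : d ∈ Dset then h.choose else ∅ with hseldef
  have hsel : ∀ d, d ∈ Dset → sel d ∈ 𝒰 ∧ (Subtype.val ⁻¹' Cyl d : Set ↥S) ⊆ sel d := by
    intro d hd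
    simp only [hseldef, dif_pos hd]
    exact ⟨hd.choose_spec.1, hd.choose_spec.2⟩
  -- every finite subset of S is captured by some usable cylinder
  have hcov : ∀ G : Finset CantorSp, ↑G ⊆ S → ∃ d ∈ Dset, ∀ x ∈ G, x ∈ Cyl d := by
    intro G hG
    obtain ⟨U, hU𝒰, hUsub⟩ := h𝒰.2.2 (G.subtype (· ∈ S))
    obtain ⟨V, hVopen, hVeq⟩ := isOpen_induced_iff.1 (h𝒰.1 U hU𝒰)
    have hGV : ∀ x ∈ G, x ∈ V := by
      intro x hx
      have hmem : (⟨x, hG (Finset.mem_coe.2 hx)⟩ : ↥S) ∈ G.subtype (· ∈ S) :=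
        Finset.mem_subtype.2 hx
      have h2 := hUsub hmem
      rw [← hVeq] at h2
      exact h2
    set mfn : CantorSp → ℕ := fun x => if h : x ∈ V then (exists_cyl hVopen h).choose else 0
      with hmfn
    set m := G.sup mfn with hm
    refine ⟨⟨m, {σ | ∃ x ∈ G, σ = fun i : Fin m => x i.1}⟩, ?_, ?_⟩
    · refine ⟨U, hU𝒰, ?_⟩
      intro y hy
      obtain ⟨x, hxG, hσ⟩ := hy
      have hagree : ∀ i, i < m → y.1 i = x i := fun i hi => congrFun hσ ⟨i, hi⟩
      have hxV := hGV x hxG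
      have hspec := (exists_cyl hVopen hxV).choose_spec
      have hmx : mfn x ≤ m := by
        rw [hm]; exact Finset.le_sup hxG
      have hyV : y.1 ∈ V := by
        apply hspec
        intro i hi
        apply hagree
        have hch : mfn x = (exists_cyl hVopen hxV).choose := by
          simp only [hmfn, dif_pos hxV]
        omega
      rw [← hVeq]
      exact hyV
    · intro x hx
      exact ⟨x, hx, rfl⟩
  -- no usable cylinder contains all of S
  have hnotall : ∀ d, d ∈ Dset → ∃ x, x ∈ S ∧ x ∉ Cyl d := by
    intro d hd
    obtain ⟨U, hU𝒰, hUsub⟩ := hd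
    obtain ⟨p, hp⟩ := (ne_univ_iff_exists_notMem U).1 (h𝒰.2.1 U hU𝒰)
    refine ⟨p.1, p.2, fun hcon => hp (hUsub hcon)⟩
  have hmany : ∀ G : Finset CantorSp, ↑G ⊆ S → ∀ D₀ : Finset PP,
      ∃ d, d ∈ Dset ∧ d ∉ D₀ ∧ ∀ x ∈ G, x ∈ Cyl d := by
    intro G hG D₀
    set wit : PP → CantorSp := fun d =>
      if h : d ∈ Dset then (hnotall d h).choose else (fun _ => false) with hwit
    have hwit1 : ∀ d, d ∈ Dset → wit d ∈ S ∧ wit d ∉ Cyl d := by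
      intro d hd
      simp only [hwit, dif_pos hd]
      exact ⟨(hnotall d hd).choose_spec.1, (hnotall d hd).choose_spec.2⟩
    set G' : Finset CantorSp := G ∪ (D₀.filter (· ∈ Dset)).image wit with hG'
    have hG'S : ↑G' ⊆ S := by
      intro x hx
      rw [hG'] at hx
      simp only [Finset.coe_union, Set.mem_union, Finset.coe_image, Set.mem_image,
        Finset.mem_coe, Finset.mem_filter] at hx
      rcases hx with hx | ⟨d, ⟨-, hd⟩, rfl⟩
      · exact hG hx
      · exact (hwit1 d hd).1
    obtain ⟨d, hdD, hdall⟩ := hcov G' hG'S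
    refine ⟨d, hdD, ?_, fun x hx => hdall x (Finset.mem_union_left _ hx)⟩
    intro hdD₀
    apply (hwit1 d hdD).2
    apply hdall
    rw [hG']
    apply Finset.mem_union_right
    exact Finset.mem_image_of_mem wit (Finset.mem_filter.2 ⟨hdD₀, hdD⟩)
  -- the Q-sets
  set Qset : Finset CantorSp → ℕ → Set PP := fun G M =>
    {d | d ∈ Dset ∧ (∀ x ∈ G, x ∈ Cyl d) ∧
      ∀ w : Finset ℕ, w ⊆ Finset.range M → chi w ∈ Cyl d} with hQset
  have hQinf : ∀ G : Finset CantorSp, ↑G ⊆ S → ∀ M, (Qset G M).Infinite := by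
    intro G hG M
    by_contra hfin
    rw [Set.not_infinite] at hfin
    have hsub2 : ↑(G ∪ (Finset.range M).powerset.image chi) ⊆ S := by
      intro x hx
      simp only [Finset.coe_union, Set.mem_union, Finset.coe_image, Set.mem_image,
        Finset.mem_coe, Finset.mem_powerset] at hx
      rcases hx with hx | ⟨w, -, rfl⟩
      · exact hG hx
      · exact hCFinS (chi_mem_CFin w)
    obtain ⟨d, hdD, hdnot, hdall⟩ := hmany _ hsub2 hfin.toFinset
    apply hdnot
    rw [Set.Finite.mem_toFinset]
    refine ⟨hdD, fun x hx => hdall x (Finset.mem_union_left _ hx), fun w hw => ?_⟩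
    exact hdall (chi w) (Finset.mem_union_right _
      (Finset.mem_image_of_mem chi (Finset.mem_powerset.2 hw)))
  set dfun : Finset CantorSp → ℕ → PP := fun G M =>
    if h : (Qset G M).Nonempty then h.choose else ⟨0, ∅⟩ with hdfdef
  have hdfun : ∀ G : Finset CantorSp, ↑G ⊆ S → ∀ M, dfun G M ∈ Qset G M := by
    intro G hG M
    have hne := (hQinf G hG M).nonempty
    rw [show dfun G M = hne.choose from dif_pos hne]
    exact hne.choose_spec
  set gfun : Finset CantorSp → ℕ → ℕ := fun G M => (dfun G M).1 with hgfun
  -- the bounding functions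
  set ℱ : Ordinal → Set (ℕ → ℕ) := fun β =>
    (fun G => hFn (gfun G)) '' {G : Finset CantorSp | ↑G ⊆ Tle t β} with hℱ
  have hℱcard : ∀ β, β < frp.ord → #(ℱ β) < frp := by
    intro β hβ
    exact lt_of_le_of_lt Cardinal.mk_image_le (mk_finsets_lt (mk_Tle_lt t hβ hale) hale)
  have hHcex : ∀ β, β < frp.ord → ∃ H, ∀ h' ∈ ℱ β, LeStar h' H :=
    fun β hβ => bounded_of_mk_lt hale _ (hℱcard β hβ)
  set Hc : Ordinal → (ℕ → ℕ) := fun β =>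
    if h : β < frp.ord then (hHcex β h).choose else id with hHcdef
  have hHc : ∀ β, β < frp.ord → ∀ h' ∈ ℱ β, LeStar h' (Hc β) := by
    intro β hβ
    simp only [hHcdef, dif_pos hβ]
    exact (hHcex β hβ).choose_spec
  -- the critical index
  obtain ⟨α₀, hα₀pos, hα₀lt, hα₀esc⟩ := exists_alpha0 ht Hc
  -- the nice cylinder sets
  set Bstar : ℕ → Set PP := fun M => {d | d ∈ Dset ∧
    ∀ w : Finset ℕ, (↑w : Set ℕ) ⊆ {n | t α₀ n = true} ∪ Set.Iio M → chi w ∈ Cyl d}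
    with hBstar
  set Btil : CantorSp → Set PP := fun x => {d | d ∈ Dset ∧ x ∈ Cyl d} with hBtil
  have hBanti : ∀ M M' : ℕ, M ≤ M' → Bstar M' ⊆ Bstar M := by
    intro M M' hMM d hd
    refine ⟨hd.1, fun w hw => hd.2 w ?_⟩
    intro n hn
    rcases hw hn with h | h
    · exact Or.inl h
    · exact Or.inr (lt_of_lt_of_le h hMM)
  have hBmem : ∀ M d, d ∈ Bstar M → ∀ x : CantorSp,
      {n | x n = true} ⊆ {n | t α₀ n = true} ∪ Set.Iio M → x ∈ Cyl d := by
    intro M d hd x hx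
    apply mem_cyl_of_trunc
    apply hd.2
    intro n hn
    rw [Finset.mem_coe, mem_trunc] at hn
    exact hx hn.2
  -- THE KEY LEMMA
  have KEY : ∀ (M : ℕ) (G : Finset CantorSp), ↑G ⊆ Tlt t α₀ →
      {d | d ∈ Bstar M ∧ ∀ x ∈ G, x ∈ Cyl d}.Infinite := by
    intro M G hGT
    have hGS : ↑G ⊆ S := by
      intro x hx
      obtain ⟨γ, hγ, rfl⟩ := hGT hx
      exact hrange γ (lt_trans hγ hα₀lt)
    set cγ : CantorSp → Ordinal := fun x =>
      if h : ∃ γ, γ < α₀ ∧ x = t γ then h.choose else 0 with hcγ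
    have hcγ1 : ∀ x, x ∈ Tlt t α₀ → cγ x < α₀ ∧ x = t (cγ x) := by
      intro x hx
      have hx' : ∃ γ, γ < α₀ ∧ x = t γ := hx
      simp only [hcγ, dif_pos hx']
      exact ⟨hx'.choose_spec.1, hx'.choose_spec.2⟩
    set β := G.sup cγ with hβdef
    have hβα₀ : β < α₀ := by
      rw [hβdef, Finset.sup_lt_iff (by simpa [Ordinal.bot_eq_zero] using hα₀pos)]
      intro x hx
      exact (hcγ1 x (hGT (Finset.mem_coe.2 hx))).1
    have hGTβ : ↑G ⊆ Tle t β := by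
      intro x hx
      exact ⟨cγ x, Finset.le_sup (Finset.mem_coe.1 hx), (hcγ1 x (hGT hx)).2⟩
    have hfG : hFn (gfun G) ∈ ℱ β := ⟨G, hGTβ, rfl⟩
    have hβord : β < frp.ord := lt_trans hβα₀ hα₀lt
    have hesc2 : ¬ LeStar (enum (t α₀)) (hFn (gfun G)) := by
      intro hcon
      exact hα₀esc β hβα₀ (leStar_trans hcon (hHc β hβord _ hfG))
    have hgaps := gaps_infinite (ht.1.1 α₀ hα₀lt) hesc2
    by_contra hfin
    rw [Set.not_infinite] at hfin
    set A := {M' | (∀ k, t α₀ k = true → M' ≤ k → ¬ k < gfun G M') ∧ M ≤ M'} with hA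
    have hAinf : A.Infinite := by
      apply (hgaps.diff (Set.finite_Iio M)).mono
      intro n hn
      exact ⟨hn.1, not_lt.1 hn.2⟩
    have hmaps : ∀ M' ∈ A, dfun G M' ∈ {d | d ∈ Bstar M ∧ ∀ x ∈ G, x ∈ Cyl d} := by
      intro M' hM'
      obtain ⟨hdD, hdG, hdw⟩ := hdfun G hGS M'
      refine ⟨⟨hdD, ?_⟩, hdG⟩
      intro w hw
      set w' := w.filter (fun n => n < (dfun G M').1) with hw'
      have hagree : ∀ i, i < (dfun G M').1 → chi w i = chi w' i := by
        intro i hi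
        by_cases h : i ∈ w
        · simp [chi, hw', h, hi]
        · simp [chi, hw', h]
      have hw'sub : w' ⊆ Finset.range M' := by
        intro n hn
        rw [hw', Finset.mem_filter] at hn
        obtain ⟨hnw, hnd⟩ := hn
        rw [Finset.mem_range]
        rcases hw (Finset.mem_coe.2 hnw) with h | h
        · by_contra hcon
          exact (hM'.1 n h (not_lt.1 hcon)) hnd
        · exact lt_of_lt_of_le h hM'.2
      exact (cyl_agree hagree).2 (hdw w' hw'sub)
    obtain ⟨dstar, hdstar, hfib⟩ :=
      pigeonhole_infinite A (fun M' => dfun G M') _ hAinf hfin hmaps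
    obtain ⟨x, hxS, hxnot⟩ := hnotall dstar hdstar.1.1
    apply hxnot
    obtain ⟨M', hM'fib, hM'gt⟩ := hfib.exists_gt dstar.1
    have hQ := hdfun G hGS M'
    rw [hM'fib.2] at hQ
    obtain ⟨-, -, hQw⟩ := hQ
    apply mem_cyl_of_trunc
    apply hQw (trunc x dstar.1)
    intro n hn
    rw [mem_trunc] at hn
    rw [Finset.mem_range]
    omega
  -- the centered family and its pseudointersection
  have hDinf : Dset.Infinite := (hQinf ∅ (by simp) 0).mono (fun d hd => hd.1)
  haveI hDcnt : Countable ↥Dset := (Set.to_countable Dset).to_subtype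
  haveI hDinf2 : Infinite ↥Dset := hDinf.to_subtype
  haveI : Encodable ↥Dset := Encodable.ofCountable _
  haveI : Denumerable ↥Dset := Denumerable.ofEncodableOfInfinite _
  set e : ↥Dset ≃ ℕ := Denumerable.eqv ↥Dset with he
  set ρ : Set PP → CantorSp := fun R => fun n => decide ((e.symm n).1 ∈ R) with hρ
  have hρset : ∀ R, R ⊆ Dset → R.Infinite → {n : ℕ | (e.symm n).1 ∈ R}.Infinite := by
    intro R hRD hR
    haveI := hR.to_subtype
    apply Set.infinite_of_injective_forall_mem (f := fun r : ↥R => e ⟨r.1, hRD r.2⟩)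
    · intro r1 r2 h
      apply Subtype.ext
      have h2 := e.injective h
      exact congrArg (fun z : ↥Dset => z.1) h2
    · intro r
      simp only [Set.mem_setOf_eq, Equiv.symm_apply_apply]
      exact r.2
  have hρCInf : ∀ R, R ⊆ Dset → R.Infinite → ρ R ∈ CInf := by
    intro R hRD hR
    apply (hρset R hRD hR).mono
    intro n hn
    simp only [hρ, Set.mem_setOf_eq, decide_eq_true_eq]
    exact hn
  set 𝒞 : Set CantorSp := (Set.range fun M : ℕ => ρ (Bstar M)) ∪
    ((fun x => ρ (Btil x)) '' Tlt t α₀) with h𝒞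
  have hBstarInf : ∀ M, (Bstar M).Infinite := by
    intro M
    exact (KEY M ∅ (by simp)).mono (fun d hd => hd.1)
  have hBtilInf : ∀ x, x ∈ Tlt t α₀ → (Btil x).Infinite := by
    intro x hx
    apply (KEY 0 {x} (by simpa using hx)).mono
    intro d hd
    exact ⟨hd.1.1, hd.2 x (Finset.mem_singleton_self x)⟩
  have h𝒞cent : Centered 𝒞 := by
    constructor
    · intro y hy
      rcases hy with ⟨M, hM⟩ | ⟨x, hxT, hyx⟩
      · rw [← hM]
        exact hρCInf _ (fun d hd => hd.1) (hBstarInf M)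
      · rw [← hyx]
        exact hρCInf _ (fun d hd => hd.1) (hBtilInf x hxT)
    · intro F' hF'
      set pickM : CantorSp → ℕ := fun y =>
        if h : ∃ M : ℕ, y = ρ (Bstar M) then h.choose else 0 with hpickM
      have hpickM1 : ∀ y, (∃ M : ℕ, y = ρ (Bstar M)) → y = ρ (Bstar (pickM y)) := by
        intro y h
        simp only [hpickM, dif_pos h]
        exact h.choose_spec
      set pickx : CantorSp → CantorSp := fun y =>
        if h : ∃ x, x ∈ Tlt t α₀ ∧ y = ρ (Btil x) then h.choose else t 0 with hpickx
      have hpickx1 : ∀ y, (∃ x, x ∈ Tlt t α₀ ∧ y = ρ (Btil x)) →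
          pickx y ∈ Tlt t α₀ ∧ y = ρ (Btil (pickx y)) := by
        intro y h
        simp only [hpickx, dif_pos h]
        exact ⟨h.choose_spec.1, h.choose_spec.2⟩
      set Mstar := F'.sup pickM with hMstar
      set GF := (F'.filter (fun y => ∃ x, x ∈ Tlt t α₀ ∧ y = ρ (Btil x))).image pickx
        with hGF
      have hGFT : ↑GF ⊆ Tlt t α₀ := by
        intro x hx
        rw [hGF] at hx
        simp only [Finset.coe_image, Set.mem_image, Finset.mem_coe,
          Finset.mem_filter] at hx
        obtain ⟨y, ⟨hyF, hyex⟩, rfl⟩ := hx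
        exact (hpickx1 y hyex).1
      have hR₀ := KEY Mstar GF hGFT
      apply ((hρset _ (fun d hd => hd.1.1) hR₀).mono)
      intro n hn
      simp only [Set.mem_setOf_eq] at hn ⊢
      intro y hyF'
      rcases hF' hyF' with ⟨M, hM⟩ | ⟨x, hxT, hyx⟩
      · have hex : ∃ M : ℕ, y = ρ (Bstar M) := ⟨M, hM.symm⟩
        rw [hpickM1 y hex]
        simp only [hρ, decide_eq_true_eq]
        exact hBanti _ _ (Finset.le_sup hyF') hn.1
      · have hex : ∃ x, x ∈ Tlt t α₀ ∧ y = ρ (Btil x) := ⟨x, hxT, hyx.symm⟩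
        rw [(hpickx1 y hex).2]
        simp only [hρ, decide_eq_true_eq]
        refine ⟨(e.symm n).2, ?_⟩
        apply hn.2
        rw [hGF]
        exact Finset.mem_image_of_mem pickx (Finset.mem_filter.2 ⟨hyF', hex⟩)
  have h𝒞card : #𝒞 < frp := by
    apply lt_of_le_of_lt (Cardinal.mk_union_le _ _)
    apply Cardinal.add_lt_of_lt hale.le
    · exact lt_of_le_of_lt Cardinal.mk_range_le (by simpa using hale)
    · apply lt_of_le_of_lt Cardinal.mk_image_le
      apply lt_of_le_of_lt (mk_Tlt_le t α₀)
      exact Cardinal.lt_ord.1 hα₀lt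
  obtain ⟨a, haInf, hasub⟩ := pseudo_of_lt h𝒞cent h𝒞card
  have hbad : ∀ R, ρ R ∈ 𝒞 → {n | a n = true ∧ (e.symm n).1 ∉ R}.Finite := by
    intro R hR
    apply (hasub (ρ R) hR).subset
    intro n hn
    refine ⟨hn.1, ?_⟩
    simp only [hρ, decide_eq_true_eq]
    exact hn.2
  -- every point of S has a condition set
  have hpoint : ∀ p, p ∈ S → ∃ R, ρ R ∈ 𝒞 ∧ ∀ d, d ∈ R → p ∈ Cyl d := by
    intro p hp
    rcases hmemS p hp with ⟨γ, hγ, rfl⟩ | hpf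
    · rcases lt_trichotomy γ α₀ with hlt | heq | hgt
      · exact ⟨Btil (t γ), Or.inr ⟨t γ, ⟨γ, hlt, rfl⟩, rfl⟩, fun d hd => hd.2⟩
      · subst heq
        refine ⟨Bstar 0, Or.inl ⟨0, rfl⟩, fun d hd => hBmem 0 d hd _ ?_⟩
        intro n hn
        exact Or.inl hn
      · have hsub2 := ht.1.2 α₀ γ hgt hγ
        obtain ⟨b, hb⟩ := hsub2.bddAbove
        refine ⟨Bstar (b+1), Or.inl ⟨b+1, rfl⟩, fun d hd => hBmem _ d hd _ ?_⟩
        intro n hn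
        by_cases h : t α₀ n = true
        · exact Or.inl h
        · have hnb : n ≤ b := hb ⟨hn, h⟩
          exact Or.inr (Set.mem_Iio.2 (by omega))
    · obtain ⟨b, hb⟩ := hpf.bddAbove
      refine ⟨Bstar (b+1), Or.inl ⟨b+1, rfl⟩, fun d hd => hBmem _ d hd _ ?_⟩
      intro n hn
      have hnb : n ≤ b := hb hn
      exact Or.inr (Set.mem_Iio.2 (by omega))
  -- the final cover
  set 𝒱 : Set (Set ↥S) := (fun n : ℕ => sel (e.symm n).1) '' {n | a n = true} with h𝒱
  have h𝒱𝒰 : 𝒱 ⊆ 𝒰 := by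
    rintro U ⟨n, hn, rfl⟩
    exact (hsel _ (e.symm n).2).1
  refine ⟨𝒱, h𝒱𝒰, ?_, ?_, ?_⟩
  · intro U hU
    exact h𝒰.1 U (h𝒱𝒰 hU)
  · by_contra hVfin
    rw [Set.not_infinite] at hVfin
    obtain ⟨Ustar, hUstar, hfib⟩ := pigeonhole_infinite {n | a n = true}
      (fun n => sel (e.symm n).1) 𝒱 haInf hVfin (fun n hn => ⟨n, hn, rfl⟩)
    have hallp : ∀ p : ↥S, p ∈ Ustar := by
      intro p
      obtain ⟨R, hR𝒞, hRmem⟩ := hpoint p.1 p.2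
      obtain ⟨n, hn⟩ := (hfib.diff (hbad R hR𝒞)).nonempty
      obtain ⟨⟨hnA, hnf⟩, hnbad⟩ := hn
      have hnR : (e.symm n).1 ∈ R := by
        by_contra hcon
        exact hnbad ⟨hnA, hcon⟩
      have hpC : p.1 ∈ Cyl (e.symm n).1 := hRmem _ hnR
      have hmem2 := (hsel _ (e.symm n).2).2 hpC
      have hnf' : sel (e.symm n).1 = Ustar := hnf
      rwa [hnf'] at hmem2
    exact (h𝒰.2.1 Ustar (h𝒱𝒰 hUstar)) (Set.eq_univ_iff_forall.2 hallp)
  · intro p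
    obtain ⟨R, hR𝒞, hRmem⟩ := hpoint p.1 p.2
    apply (((hbad R hR𝒞).image (fun n => sel (e.symm n).1)).subset)
    intro U hU
    obtain ⟨hU𝒱, hpU⟩ := hU
    obtain ⟨n, hnA, rfl⟩ := hU𝒱
    refine ⟨n, ⟨hnA, ?_⟩, rfl⟩
    intro hcon
    exact hpU ((hsel _ (e.symm n).2).2 (hRmem _ hcon))

/-- For each unbounded `𝔭`-tower `T`, the subspace `T ∪ Fin` of the Cantor
space is an ω-γ set. -/
theorem stmt6 (t : Ordinal → CantorSp) (ht : IsUnboundedTower frp t) :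
    OmegaGammaSet ↥(rangeBelow t frp.ord ∪ CFin) := by
  intro 𝒰 h𝒰
  exact main_aux t ht _ rfl 𝒰 h𝒰
end OmissionOfIntervals
end

section
/- Let X be a subset of the Cantor space 𝒫(ℕ). Then X is Menger if and only if for every continuous map Φ : X → ℕ^ℕ into the Baire space, the image Φ(X) is not dominating. -/
open Set Filter Cardinal

namespace OmissionOfIntervals

section Helpers

open Encodable

/-- If a finite family of sets is contained in the range of a monotone `ℕ`-indexed family,
then its union is contained in a single member. -/
lemma exists_sup_of_finite {T : Type*} (A : ℕ → Set T) (hA : Monotone A)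
    {F : Set (Set T)} (hF : F.Finite) (hFr : F ⊆ Set.range A) : ∃ K, ⋃₀ F ⊆ A K := by
  refine Set.Finite.induction_on (motive := fun F _ => F ⊆ Set.range A → ∃ K, ⋃₀ F ⊆ A K)
    F hF (fun _ => ⟨0, by simp⟩) ?_ hFr
  rintro U F - - ih hsub
  obtain ⟨K₁, hK₁⟩ := ih fun V hV => hsub (Set.mem_insert_of_mem _ hV)
  obtain ⟨k, rfl⟩ := hsub (Set.mem_insert _ _)
  refine ⟨max k K₁, ?_⟩
  rw [Set.sUnion_insert]
  exact Set.union_subset (hA (le_max_left _ _)) (hK₁.trans (hA (le_max_right _ _)))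

/-- Enumeration of finitely supported functions `ℕ → ℕ` (via lists). -/
def cfin (j i : ℕ) : ℕ := (Denumerable.ofNat (List ℕ) j).getD i 0

lemma cfin_encode (g : ℕ → ℕ) (N : ℕ) {i : ℕ} (hi : i < N) :
    cfin (Encodable.encode (List.ofFn fun i : Fin N => g i)) i = g i := by
  unfold cfin
  rw [Denumerable.ofNat_encode]
  have hlen : i < (List.ofFn fun i : Fin N => g i).length := by simpa using hi
  rw [List.getD_eq_getElem _ _ hlen, List.getElem_ofFn]

/-- Basic clopen cylinders in (a subspace of) the Cantor space. -/
def cyl (X : Set CantorSp) (σ : List Bool) : Set ↥X :=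
  {x | ∀ i < σ.length, (x : CantorSp) i = σ.getD i false}

lemma isClopen_cyl (X : Set CantorSp) (σ : List Bool) : IsClopen (cyl X σ) := by
  have h : cyl X σ = ⋂ i ∈ Finset.range σ.length,
      (fun x : ↥X => (x : CantorSp) i) ⁻¹' {σ.getD i false} := by
    ext x; simp [cyl]
  rw [h]
  apply Set.Finite.isClopen_biInter (Finset.range σ.length).finite_toSet
  intro i _
  exact (isClopen_discrete _).preimage ((continuous_apply i).comp continuous_subtype_val)

lemma exists_cyl_subset {X : Set CantorSp} {U : Set ↥X} (hU : IsOpen U) {x : ↥X}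
    (hx : x ∈ U) : ∃ σ : List Bool, x ∈ cyl X σ ∧ cyl X σ ⊆ U := by
  obtain ⟨V, hV, rfl⟩ := isOpen_induced_iff.mp hU
  obtain ⟨I, u, h1, h2⟩ := isOpen_pi_iff.mp hV (x : CantorSp) hx
  set N := I.sup id + 1 with hN
  refine ⟨List.ofFn (fun i : Fin N => (x : CantorSp) i), ?_, ?_⟩
  · intro i hi
    have hi' : i < N := by rw [List.length_ofFn] at hi; exact hi
    rw [List.getD_eq_getElem _ _ (by rw [List.length_ofFn]; exact hi'), List.getElem_ofFn]
  · intro y hy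
    have hyx : ∀ i < N, (y : CantorSp) i = (x : CantorSp) i := by
      intro i hi
      have h3 := hy i (by rw [List.length_ofFn]; exact hi)
      rwa [List.getD_eq_getElem _ _ (by rw [List.length_ofFn]; exact hi), List.getElem_ofFn] at h3
    show (y : CantorSp) ∈ V
    apply h2
    rw [Set.mem_pi]
    intro i hiI
    have hiN : i < N := Nat.lt_succ_of_le (Finset.le_sup (f := id) hiI)
    rw [hyx i hiN]
    exact (h1 i hiI).2

end Helpers

/-- A subset `X` of the Cantor space is Menger iff no continuous image of `X`
in the Baire space is dominating. -/
theorem stmt8 (X : Set CantorSp) :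
    Menger ↥X ↔ ∀ Φ : ↥X → (ℕ → ℕ), Continuous Φ → ¬ Dominating (Set.range Φ) := by
  constructor
  · intro hM Φ hΦ hD
    classical
    set A : ℕ → ℕ → ℕ → Set ↥X := fun j i k => {x | max (Φ x i) (cfin j i) ≤ k} with hA
    have hAopen : ∀ j i k, IsOpen (A j i k) := by
      intro j i k
      have hc : Continuous fun x : ↥X => max (Φ x i) (cfin j i) :=
        ((continuous_apply i).comp hΦ).max continuous_const
      exact (isOpen_discrete {t : ℕ | t ≤ k}).preimage hc
    have hAmono : ∀ j i, Monotone (A j i) := fun j i k k' hk x hx => le_trans hx hk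
    have key : ∀ j, ∃ K : ℕ → ℕ, ∀ x : ↥X, ∃ m,
        max (Φ x (m + j)) (cfin j (m + j)) ≤ K m := by
      intro j
      have hoc : ∀ m, IsOpenCover (Set.range (A j (m + j))) := by
        intro m
        constructor
        · rintro U ⟨k, rfl⟩; exact hAopen j (m + j) k
        · apply Set.eq_univ_of_forall
          intro x
          exact ⟨A j (m + j) (max (Φ x (m + j)) (cfin j (m + j))), ⟨_, rfl⟩, by simp [hA]⟩
      obtain ⟨𝓕, h𝓕, hcov⟩ := hM (fun m => Set.range (A j (m + j))) hoc
      choose K hK using fun m =>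
        exists_sup_of_finite (A j (m + j)) (hAmono j (m + j)) (h𝓕 m).2 (h𝓕 m).1
      refine ⟨K, fun x => ?_⟩
      have hx : x ∈ ⋃₀ ⋃ m, 𝓕 m := by rw [hcov]; trivial
      obtain ⟨U, hU, hxU⟩ := hx
      obtain ⟨m, hm⟩ := Set.mem_iUnion.mp hU
      exact ⟨m, hK m ⟨U, hm, hxU⟩⟩
    choose K hK using key
    set k : ℕ → ℕ := fun i => (Finset.range (i + 1)).sup fun j => K j (i - j) with hk
    set g : ℕ → ℕ := fun i => k i + 1 with hg
    obtain ⟨s, ⟨x, rfl⟩, hs⟩ := hD g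
    obtain ⟨N, hN⟩ := Filter.eventually_atTop.mp hs
    set j₀ := Encodable.encode (List.ofFn fun i : Fin N => g i) with hj₀
    obtain ⟨m, hm⟩ := hK j₀ x
    set i := m + j₀ with hi
    have h1 : K j₀ m ≤ k i := by
      have hmem : j₀ ∈ Finset.range (i + 1) := Finset.mem_range.mpr (by omega)
      have h4 := Finset.le_sup (f := fun j => K j (i - j)) hmem
      simpa [hk, hi, Nat.add_sub_cancel] using h4
    have h2 : g i ≤ max (Φ x i) (cfin j₀ i) := by
      rcases lt_or_ge i N with h | h
      · exact le_trans (le_of_eq (cfin_encode g N h).symm) (le_max_right _ _)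
      · exact le_trans (hN i h) (le_max_left _ _)
    have h5 := le_trans h2 (le_trans hm h1)
    simp [hg] at h5
  · intro h 𝒰 h𝒰
    classical
    by_cases hfin : ∃ n, ∃ 𝓕 : Set (Set ↥X), 𝓕 ⊆ 𝒰 n ∧ 𝓕.Finite ∧ ⋃₀ 𝓕 = Set.univ
    · obtain ⟨n₀, 𝓕₀, hsub, hfin₀, hcov₀⟩ := hfin
      refine ⟨fun n => if n = n₀ then 𝓕₀ else ∅, fun n => ?_, ?_⟩
      · by_cases hn : n = n₀ <;> simp [hn, hsub, hfin₀]
      · apply Set.eq_univ_of_forall; intro x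
        have hx : x ∈ ⋃₀ 𝓕₀ := hcov₀ ▸ Set.mem_univ x
        obtain ⟨U, hU, hxU⟩ := hx
        exact ⟨U, Set.mem_iUnion.mpr ⟨n₀, by simp [hU]⟩, hxU⟩
    · push_neg at hfin
      set d : ℕ → List Bool := fun i => (Encodable.decode (α := List Bool) i).getD [] with hd
      set G : ℕ → Set (List Bool) := fun n => {σ | ∃ U ∈ 𝒰 n, cyl X σ ⊆ U} with hG
      have hpick : ∀ n σ, σ ∈ G n → ∃ U, U ∈ 𝒰 n ∧ cyl X σ ⊆ U := fun n σ hσ => hσ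
      choose pick hpick1 hpick2 using hpick
      set W : ℕ → ℕ → Set ↥X := fun n m =>
        ⋃ i ∈ Finset.range (m + 1), ⋃ (_ : d i ∈ G n), cyl X (d i) with hW
      have hWclopen : ∀ n m, IsClopen (W n m) := by
        intro n m
        apply Set.Finite.isClopen_biUnion (Finset.range (m + 1)).finite_toSet
        intro i _
        by_cases hi : d i ∈ G n
        · simpa [hi] using isClopen_cyl X (d i)
        · simpa [hi] using (isClopen_empty : IsClopen (∅ : Set ↥X))
      have hWmono : ∀ n, Monotone (W n) := by
        intro n m m' hm
        apply Set.biUnion_subset_biUnion_left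
        exact Finset.coe_subset.mpr (Finset.range_subset_range.mpr (by omega))
      have hWcov : ∀ n (x : ↥X), ∃ m, x ∈ W n m := by
        intro n x
        have hx : x ∈ ⋃₀ 𝒰 n := (h𝒰 n).2 ▸ Set.mem_univ x
        obtain ⟨U, hU, hxU⟩ := hx
        obtain ⟨σ, hxσ, hσU⟩ := exists_cyl_subset ((h𝒰 n).1 U hU) hxU
        refine ⟨Encodable.encode σ, ?_⟩
        have hdσ : d (Encodable.encode σ) = σ := by simp [hd, Encodable.encodek]
        apply Set.mem_biUnion (Finset.mem_range.mpr (Nat.lt_succ_self _))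
        rw [hdσ]
        exact Set.mem_iUnion.mpr ⟨⟨U, hU, hσU⟩, hxσ⟩
      -- the finite selections associated to an initial segment of cylinders
      set FF : ℕ → ℕ → Set (Set ↥X) := fun n m =>
        {U | ∃ i, i ≤ m ∧ ∃ hi : d i ∈ G n, U = pick n (d i) hi} with hFF
      have hFFfin : ∀ n m, (FF n m).Finite := by
        intro n m
        have hsub : FF n m ⊆
            ⋃ i ∈ Finset.range (m + 1), ⋃ (hi : d i ∈ G n), {pick n (d i) hi} := by
          rintro U ⟨i, him, hi, rfl⟩
          exact Set.mem_biUnion (Finset.mem_range.mpr (by omega))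
            (Set.mem_iUnion.mpr ⟨hi, rfl⟩)
        refine Set.Finite.subset
          (Set.Finite.biUnion (Finset.range (m + 1)).finite_toSet ?_) hsub
        intro i _
        by_cases hi : d i ∈ G n
        · refine Set.Finite.subset (Set.finite_singleton (pick n (d i) hi)) ?_
          rintro U hU
          obtain ⟨h', rfl⟩ := Set.mem_iUnion.mp hU
          simp
        · refine Set.Finite.subset Set.finite_empty ?_
          rintro U hU
          obtain ⟨h', -⟩ := Set.mem_iUnion.mp hU
          exact absurd h' hi
      have hFFsub : ∀ n m, FF n m ⊆ 𝒰 n := by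
        rintro n m U ⟨i, -, hi, rfl⟩
        exact hpick1 n (d i) hi
      have hFFcov : ∀ n m, W n m ⊆ ⋃₀ FF n m := by
        intro n m x hx
        simp only [hW, Set.mem_iUnion, Finset.mem_range] at hx
        obtain ⟨i, hi, hG', hxc⟩ := hx
        exact ⟨pick n (d i) hG', ⟨i, by omega, hG', rfl⟩, hpick2 n (d i) hG' hxc⟩
      -- each W n m is a proper subset
      have hWne : ∀ n m, W n m ≠ Set.univ := by
        intro n m hWuniv
        refine hfin n (FF n m) (hFFsub n m) (hFFfin n m) ?_
        apply Set.eq_univ_of_forall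
        intro x
        exact hFFcov n m (hWuniv ▸ Set.mem_univ x)
      -- the continuous map
      set Φ : ↥X → ℕ → ℕ := fun x n => sInf {m | x ∈ W n m} with hΦ
      have hΦmem : ∀ (x : ↥X) (n : ℕ), x ∈ W n (Φ x n) := fun x n =>
        Nat.sInf_mem (hWcov n x)
      have hΦleast : ∀ (x : ↥X) (n m : ℕ), x ∈ W n m → Φ x n ≤ m := fun x n m hm =>
        Nat.sInf_le hm
      have hΦopen : ∀ n m, IsOpen {x : ↥X | Φ x n = m} := by
        intro n m
        match m with
        | 0 =>
          have he : {x : ↥X | Φ x n = 0} = W n 0 := by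
            ext x
            simp only [Set.mem_setOf_eq, hΦ, Nat.sInf_eq_zero]
            constructor
            · rintro (hx | hx)
              · exact hx
              · exact absurd (hWcov n x)
                  (fun ⟨m', hm'⟩ => Set.eq_empty_iff_forall_notMem.mp hx m' hm')
            · exact fun hx => Or.inl hx
          rw [he]; exact (hWclopen n 0).2
        | m + 1 =>
          have he : {x : ↥X | Φ x n = m + 1} = W n (m + 1) ∩ (W n m)ᶜ := by
            ext x
            simp only [Set.mem_setOf_eq, Set.mem_inter_iff, Set.mem_compl_iff]
            constructor
            · intro hx
              constructor
              · have := hΦmem x n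
                rwa [hx] at this
              · intro hxm
                have := hΦleast x n m hxm
                omega
            · rintro ⟨h1, h2⟩
              have hle := hΦleast x n (m + 1) h1
              have hgt : m < Φ x n := by
                by_contra hc
                push_neg at hc
                exact h2 (hWmono n hc (hΦmem x n))
              omega
          rw [he]
          exact (hWclopen n (m + 1)).2.inter (hWclopen n m).1.isOpen_compl
      have hΦcont : Continuous Φ := by
        apply continuous_pi
        intro n
        have : ∀ s : Set ℕ, IsOpen ((fun x : ↥X => Φ x n) ⁻¹' s) := by
          intro s
          have he : (fun x : ↥X => Φ x n) ⁻¹' s = ⋃ m ∈ s, {x : ↥X | Φ x n = m} := by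
            ext x; simp
          rw [he]
          exact isOpen_biUnion fun m _ => hΦopen n m
        exact continuous_def.mpr fun s _ => this s
      -- apply the hypothesis
      have hnd := h Φ hΦcont
      rw [Dominating] at hnd
      push_neg at hnd
      obtain ⟨f, hf⟩ := hnd
      have hfx : ∀ x : ↥X, ∃ n, Φ x n < f n := by
        intro x
        have h1 := hf (Φ x) ⟨x, rfl⟩
        rw [LeStar, Filter.not_eventually] at h1
        obtain ⟨n, hn⟩ := h1.exists
        exact ⟨n, by omega⟩
      refine ⟨fun n => FF n (f n), fun n => ⟨hFFsub n (f n), hFFfin n (f n)⟩, ?_⟩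
      apply Set.eq_univ_of_forall
      intro x
      obtain ⟨n, hn⟩ := hfx x
      have hx : x ∈ W n (f n) := hWmono n (le_of_lt hn) (hΦmem x n)
      obtain ⟨U, hU, hxU⟩ := hFFcov n (f n) hx
      exact ⟨U, Set.mem_iUnion.mpr ⟨n, hU⟩, hxU⟩
end OmissionOfIntervals
end

section
/- Let X be a subset of the Cantor space 𝒫(ℕ). Then X is Hurewicz if and only if for every continuous map Φ : X → ℕ^ℕ into the Baire space, the image Φ(X) is bounded, i.e., there is g ∈ ℕ^ℕ with Φ(x) ≤* g for all x ∈ X. -/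
open Set Filter Cardinal

namespace OmissionOfIntervals

def CylL (s : List Bool) : Set CantorSp := {y | ∀ i < s.length, y i = s.getD i false}

lemma isClopen_cylL (s : List Bool) : IsClopen (CylL s) := by
  have h : CylL s = ⋂ i ∈ Finset.range s.length,
      (fun y : CantorSp => y i) ⁻¹' {s.getD i false} := by
    ext y; simp [CylL]
  rw [h]
  exact isClopen_biInter_finset fun i _ => (isClopen_discrete _).preimage (continuous_apply i)

lemma exists_cylL {V : Set CantorSp} (hV : IsOpen V) {x : CantorSp} (hx : x ∈ V) :
    ∃ s : List Bool, x ∈ CylL s ∧ CylL s ⊆ V := by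
  have hbasis := isTopologicalBasis_pi
    (fun i : ℕ => (TopologicalSpace.isTopologicalBasis_opens : TopologicalSpace.IsTopologicalBasis {U : Set Bool | IsOpen U}))
  obtain ⟨S, ⟨U, F, hU, rfl⟩, hxS, hSV⟩ := hbasis.exists_subset_of_mem_open hx hV
  set N := F.sup id + 1 with hN
  refine ⟨List.ofFn (fun i : Fin N => x i), ?_, ?_⟩
  · intro i hi
    simp only [List.length_ofFn] at hi
    rw [List.getD_eq_getElem _ _ (by simpa [hN] using hi), List.getElem_ofFn]
  · intro y hy
    refine hSV ?_
    intro i hiF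
    have hiN : i < N := Nat.lt_succ_of_le (Finset.le_sup (f := id) hiF)
    have : y i = x i := by
      have := hy i (by simpa [hN] using hiN)
      rwa [List.getD_eq_getElem _ _ (by simpa [hN] using hiN), List.getElem_ofFn] at this
    rw [this]
    exact hxS i hiF


/-- A subset `X` of the Cantor space is Hurewicz iff every continuous image of
`X` in the Baire space is bounded. -/
theorem stmt9 (X : Set CantorSp) :
    Hurewicz ↥X ↔
      ∀ Φ : ↥X → (ℕ → ℕ), Continuous Φ → ∃ g : ℕ → ℕ, ∀ x : ↥X, LeStar (Φ x) g := by
  classical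
  constructor
  · -- Hurewicz → bounded images
    intro hX Φ hΦ
    set A : ℕ → Prop := fun n => ¬ ∃ M, ∀ x : ↥X, Φ x n ≤ M with hAdef
    set B : ℕ → ℕ := fun n => if h : ∃ M, ∀ x : ↥X, Φ x n ≤ M then h.choose else 0 with hBdef
    have hB : ∀ n, ¬ A n → ∀ x : ↥X, Φ x n ≤ B n := by
      intro n hn x
      have h' : ∃ M, ∀ x : ↥X, Φ x n ≤ M := not_not.mp hn
      simp only [hBdef, dif_pos h']
      exact h'.choose_spec x
    by_cases hAfin : {n | A n}.Finite
    · refine ⟨B, fun x => ?_⟩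
      have hcof : {n | A n}ᶜ ∈ Filter.cofinite := hAfin.compl_mem_cofinite
      rw [Nat.cofinite_eq_atTop] at hcof
      filter_upwards [hcof] with n hn
      exact hB n hn x
    · have hAinf : {n | A n}.Infinite := hAfin
      set V : ℕ → ℕ → Set ↥X := fun n m => {x | Φ x n ≤ m} with hVdef
      have hVopen : ∀ n m, IsOpen (V n m) := by
        intro n m
        have hVe : V n m = Φ ⁻¹' ((fun f : ℕ → ℕ => f n) ⁻¹' Set.Iic m) := rfl
        rw [hVe]
        exact ((isOpen_discrete _).preimage (continuous_apply n)).preimage hΦ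
      have hbound : ∀ (n : ℕ) (𝓕 : Set (Set ↥X)), 𝓕 ⊆ Set.range (V n) → 𝓕.Finite →
          ∃ M, ⋃₀ 𝓕 ⊆ V n M := by
        intro n 𝓕 hsub hfin
        obtain ⟨t, rfl⟩ := hfin.exists_finset_coe
        set f : Set ↥X → ℕ := fun U => if h : ∃ m, U = V n m then h.choose else 0 with hfdef
        refine ⟨t.sup f, ?_⟩
        rintro x ⟨U, hU, hxU⟩
        obtain ⟨m, hm⟩ := hsub hU
        have hex : ∃ m, U = V n m := ⟨m, hm.symm⟩
        have hUf : U = V n (f U) := by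
          simp only [hfdef, dif_pos hex]
          exact hex.choose_spec
        rw [hUf] at hxU
        have h1 : Φ x n ≤ f U := hxU
        exact Nat.le_trans h1 (Finset.le_sup hU)
      set nth : ℕ → ℕ := Nat.nth A with hnthdef
      set 𝒰 : ℕ → Set (Set ↥X) := fun k => Set.range (V (nth k)) with h𝒰def
      have hoc : ∀ k, IsOpenCover (𝒰 k) := by
        intro k
        constructor
        · rintro U ⟨m, rfl⟩
          exact hVopen _ m
        · ext x
          simp only [Set.mem_univ, iff_true, Set.mem_sUnion]
          exact ⟨V (nth k) (Φ x (nth k)), ⟨Φ x (nth k), rfl⟩, Nat.le_refl _⟩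
      have hnofin : ∀ k, ¬ ∃ 𝓕 ⊆ 𝒰 k, 𝓕.Finite ∧ ⋃₀ 𝓕 = Set.univ := by
        rintro k ⟨𝓕, hsub, hfin, hcov⟩
        obtain ⟨M, hM⟩ := hbound (nth k) 𝓕 hsub hfin
        have hAn : A (nth k) := Nat.nth_mem_of_infinite hAinf k
        exact hAn ⟨M, fun x => hM (hcov ▸ Set.mem_univ x)⟩
      obtain ⟨𝓕, h𝓕, hcov⟩ := hX 𝒰 hoc hnofin
      choose M hM using fun k => hbound (nth k) (𝓕 k) (h𝓕 k).1 (h𝓕 k).2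
      refine ⟨fun n => if A n then M (Nat.count A n) else B n, fun x => ?_⟩
      obtain ⟨k₀, hk₀⟩ := Filter.eventually_atTop.mp (hcov x)
      rw [LeStar, Filter.eventually_atTop]
      refine ⟨nth k₀, fun n hn => ?_⟩
      by_cases hA : A n
      · have hnk : nth (Nat.count A n) = n := Nat.nth_count hA
        have hk : k₀ ≤ Nat.count A n := by
          have h1 : Nat.count A (nth k₀) ≤ Nat.count A n := Nat.count_monotone A hn
          rwa [hnthdef, Nat.count_nth_of_infinite hAinf] at h1
        have hx : x ∈ ⋃₀ 𝓕 (Nat.count A n) := hk₀ _ hk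
        have h2 := hM (Nat.count A n) hx
        rw [hnk] at h2
        rw [if_pos hA]
        exact h2
      · rw [if_neg hA]
        exact hB n hA x
  · -- bounded images → Hurewicz
    intro h 𝒰 h𝒰 hnofin
    by_cases hE : IsEmpty ↥X
    · refine absurd ⟨∅, empty_subset _, finite_empty, ?_⟩ (hnofin 0)
      rw [Set.sUnion_empty]
      exact (Set.univ_eq_empty_iff.mpr hE).symm
    haveI hNE : Nonempty ↥X := not_isEmpty_iff.mp hE
    obtain ⟨u, hu⟩ := exists_surjective_nat (List Bool)
    have hne : ∀ n, (𝒰 n).Nonempty := by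
      intro n
      obtain ⟨x⟩ := hNE
      have hx : x ∈ ⋃₀ 𝒰 n := by rw [(h𝒰 n).2]; trivial
      obtain ⟨U, hU, -⟩ := hx
      exact ⟨U, hU⟩
    set C : ℕ → Set ↥X := fun m => Subtype.val ⁻¹' CylL (u m) with hCdef
    have hC : ∀ m, IsClopen (C m) := fun m =>
      (isClopen_cylL (u m)).preimage continuous_subtype_val
    set P : ℕ → ℕ → Prop := fun n m => ∃ U ∈ 𝒰 n, C m ⊆ U with hPdef
    set W : ℕ → ℕ → Set ↥X := fun n m => if h : P n m then h.choose else (hne n).some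
      with hWdef
    have hW𝒰 : ∀ n m, W n m ∈ 𝒰 n := by
      intro n m
      simp only [hWdef]
      split
      · next h' => exact h'.choose_spec.1
      · exact (hne n).some_mem
    have hWC : ∀ n m, P n m → C m ⊆ W n m := by
      intro n m hP
      simp only [hWdef, dif_pos hP]
      exact hP.choose_spec.2
    have hkey : ∀ (x : ↥X) (n : ℕ), ∃ m, x ∈ C m ∧ P n m := by
      intro x n
      have hx : x ∈ ⋃₀ 𝒰 n := by rw [(h𝒰 n).2]; trivial
      obtain ⟨U, hU, hxU⟩ := hx
      obtain ⟨V, hV, hVU⟩ := isOpen_induced_iff.mp ((h𝒰 n).1 U hU)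
      have hxV : (x : CantorSp) ∈ V := by rw [← hVU] at hxU; exact hxU
      obtain ⟨s, hxs, hsV⟩ := exists_cylL hV hxV
      obtain ⟨m, rfl⟩ := hu s
      refine ⟨m, hxs, U, hU, ?_⟩
      intro y hy
      rw [← hVU]
      exact hsV hy
    set Φ : ↥X → ℕ → ℕ := fun x n => Nat.find (hkey x n) with hΦdef
    have hΦspec : ∀ x n, x ∈ C (Φ x n) ∧ P n (Φ x n) := fun x n => Nat.find_spec (hkey x n)
    have hΦcont : Continuous Φ := by
      refine continuous_pi fun n => ?_
      rw [continuous_iff_continuousAt]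
      intro x
      rw [ContinuousAt, nhds_discrete ℕ, tendsto_pure]
      set m := Φ x n with hm
      have hxm := hΦspec x n
      have hmin : ∀ m' < m, ¬ (x ∈ C m' ∧ P n m') := fun m' hm' => Nat.find_min (hkey x n) hm'
      set O : Set ↥X :=
        C m ∩ ⋂ m' ∈ Finset.range m, (if P n m' then (C m')ᶜ else Set.univ) with hOdef
      have hOopen : IsOpen O := by
        refine ((hC m).2).inter (isOpen_biInter_finset fun m' _ => ?_)
        split
        · exact (hC m').compl.2
        · exact isOpen_univ
      have hxO : x ∈ O := by
        refine ⟨hxm.1, ?_⟩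
        simp only [Set.mem_iInter, Finset.mem_range]
        intro m' hm'
        split
        · next hP =>
          intro hxC
          exact hmin m' hm' ⟨hxC, hP⟩
        · trivial
      refine Filter.mem_of_superset (hOopen.mem_nhds hxO) ?_
      intro y hy
      have hyC : y ∈ C m := hy.1
      have hy2 := hy.2
      simp only [Set.mem_iInter, Finset.mem_range] at hy2
      show Φ y n = m
      rw [hΦdef]
      rw [Nat.find_eq_iff]
      refine ⟨⟨hyC, hxm.2⟩, ?_⟩
      intro m' hm'
      rintro ⟨hyC', hP'⟩
      have := hy2 m' hm'
      rw [if_pos hP'] at this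
      exact this hyC'
    obtain ⟨g, hg⟩ := h Φ hΦcont
    refine ⟨fun n => W n '' Set.Iic (g n), fun n => ⟨?_, (Set.finite_Iic _).image _⟩, ?_⟩
    · rintro _ ⟨m, -, rfl⟩
      exact hW𝒰 n m
    · intro x
      filter_upwards [hg x] with n hn
      exact ⟨W n (Φ x n), ⟨Φ x n, hn, rfl⟩, hWC n _ (hΦspec x n).2 (hΦspec x n).1⟩
end OmissionOfIntervals
end

section
/- Let κ be an uncountable cardinal and S ⊆ [ℕ]^∞. Then S is κ-unbounded if and only if S is κ-concentrated on Fin. -/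
open Set Filter Cardinal

namespace OmissionOfIntervals

private lemma card_filter_range_eq (x : CantorSp) (m : ℕ) :
    ((Finset.range m).filter (fun k => x k = true)).card
      = (Finset.univ.filter (fun k : Fin m => x k.val = true)).card := by
  rw [Finset.card_filter, Finset.card_filter, ← Fin.sum_univ_eq_sum_range]

private lemma isClopen_W (m c : ℕ) :
    IsClopen {x : CantorSp | c ≤ ((Finset.range m).filter (fun k => x k = true)).card} := by
  have h : {x : CantorSp | c ≤ ((Finset.range m).filter (fun k => x k = true)).card}
      = (fun (x : CantorSp) (k : Fin m) => x k.val) ⁻¹'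
        {y : Fin m → Bool | c ≤ (Finset.univ.filter (fun k : Fin m => y k = true)).card} := by
    ext x
    simp [card_filter_range_eq]
  rw [h]
  exact (isClopen_discrete _).preimage (continuous_pi fun k => continuous_apply _)

private lemma enum_le_iff {x : CantorSp} (hx : x ∈ CInf) (n m : ℕ) :
    enum x n ≤ m ↔ n + 1 ≤ ((Finset.range (m + 1)).filter (fun k => x k = true)).card := by
  have hp : (setOf (fun k => x k = true)).Infinite := hx
  rw [← Nat.count_eq_card_filter_range, Nat.succ_le_iff,
    Nat.lt_nth_iff_count_lt hp, Nat.lt_succ_iff]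
  rfl

/-- For an uncountable cardinal `κ` and `S ⊆ [ℕ]^∞`, the set `S` is
`κ`-unbounded iff it is `κ`-concentrated on `Fin`. -/
theorem stmt10 (κ : Cardinal) (hκ : Cardinal.aleph0 < κ) (S : Set CantorSp)
    (hS : S ⊆ CInf) :
    KappaUnbounded κ S ↔ KappaConcentrated κ S := by
  constructor
  · rintro ⟨hcard, hb⟩
    refine ⟨hcard, fun U hU hFin => ?_⟩
    have hKc : IsCompact Uᶜ := hU.isClosed_compl.isCompact
    have hKInf : Uᶜ ⊆ CInf := by
      intro x hx
      by_contra h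
      exact hx (hFin (Set.not_infinite.mp h))
    have key : ∀ n, ∃ m, Uᶜ ⊆
        {x : CantorSp | n + 1 ≤ ((Finset.range (m + 1)).filter (fun k => x k = true)).card} := by
      intro n
      have hcov : Uᶜ ⊆ ⋃ m : ℕ,
          {x : CantorSp | n + 1 ≤ ((Finset.range (m + 1)).filter (fun k => x k = true)).card} := by
        intro x hx
        exact Set.mem_iUnion.mpr ⟨enum x n, (enum_le_iff (hKInf hx) n _).mp le_rfl⟩
      obtain ⟨t, ht⟩ := hKc.elim_finite_subcover _ (fun m => (isClopen_W _ _).isOpen) hcov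
      refine ⟨t.sup id, fun x hx => ?_⟩
      obtain ⟨m', hm't, hxm'⟩ := Set.mem_iUnion₂.mp (ht hx)
      refine le_trans hxm' (Finset.card_le_card (Finset.filter_subset_filter _
        (Finset.range_subset_range.mpr ?_)))
      simpa using Finset.le_sup (f := id) hm't
    choose b hbK using key
    have hsub : S \ U ⊆ {s ∈ S | ∀ n, enum s n ≤ b n} := fun s hs =>
      ⟨hs.1, fun n => (enum_le_iff (hS hs.1) n (b n)).mpr (hbK n hs.2)⟩
    exact lt_of_le_of_lt (Cardinal.mk_le_mk_of_subset hsub) (hb b)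
  · rintro ⟨hcard, hc⟩
    refine ⟨hcard, fun b => ?_⟩
    set C : Set CantorSp := ⋂ n, {x : CantorSp |
      n + 1 ≤ ((Finset.range (b n + 1)).filter (fun k => x k = true)).card} with hC
    have hCclosed : IsClosed C := isClosed_iInter fun n => (isClopen_W _ _).isClosed
    have hFinSub : CFin ⊆ Cᶜ := by
      intro x hx hxC
      have hxf : {n | x n = true}.Finite := hx
      have h1 := Set.mem_iInter.mp hxC hxf.toFinset.card
      have h2 : ((Finset.range (b hxf.toFinset.card + 1)).filter
          (fun k => x k = true)).card ≤ hxf.toFinset.card := by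
        apply Finset.card_le_card
        intro k hk
        simp only [Finset.mem_filter] at hk
        simpa using hk.2
      simp only [Set.mem_setOf_eq] at h1
      omega
    have hlt : #(S \ Cᶜ : Set CantorSp) < κ := hc Cᶜ hCclosed.isOpen_compl hFinSub
    have hsub : {s ∈ S | ∀ n, enum s n ≤ b n} ⊆ S \ Cᶜ := by
      intro s hs
      have hsC : s ∈ C :=
        Set.mem_iInter.mpr fun n => (enum_le_iff (hS hs.1) n (b n)).mp (hs.2 n)
      exact ⟨hs.1, fun h => h hsC⟩
    exact lt_of_le_of_lt (Cardinal.mk_le_mk_of_subset hsub) hlt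
end OmissionOfIntervals
end

section
/- Let κ be a cardinal with ℵ₁ ≤ κ ≤ 𝔠 (the cardinality of the continuum). If a set X ⊆ 𝒫(ℕ) is κ-concentrated on Fin, then the subspace X of the Cantor space is not σ-compact (not a countable union of compact subsets). -/
open Set Filter Cardinal

namespace OmissionOfIntervals

lemma cfin_countable : CFin.Countable := by
  have : CFin ⊆ Set.range (fun s : Finset ℕ => (fun n => decide (n ∈ s) : CantorSp)) := by
    intro x hx
    refine ⟨(show {n | x n = true}.Finite from hx).toFinset, ?_⟩
    funext n
    by_cases h : x n = true <;> simp [Set.Finite.mem_toFinset, h]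
  exact (Set.countable_range _).mono this

-- avoidance embedding
lemma avoid (e : ℕ → CantorSp) :
    ∃ h : CantorSp → CantorSp, Continuous h ∧ Function.Injective h ∧ ∀ y n, h y ≠ e n := by
  refine ⟨fun y m => if m % 2 = 0 then y (m / 2) else !(e (m / 2) m), ?_, ?_, ?_⟩
  · refine continuous_pi fun m => ?_
    by_cases hm : m % 2 = 0 <;> simp only [hm, if_true, if_false]
    · exact continuous_apply _
    · exact continuous_const
  · intro y z hyz
    funext n
    have := congrFun hyz (2 * n)
    simpa using this
  · intro y n hne
    have := congrFun hne (2 * n + 1)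
    have h2 : (2 * n + 1) / 2 = n := by omega
    have h3 : ¬ (2 * n + 1) % 2 = 0 := by omega
    simp only [h3, if_false, h2] at this
    simp at this

noncomputable section
lemma mk_nat_bool : #(ℕ → Bool) = Cardinal.continuum := by
  rw [Cardinal.mk_arrow, Cardinal.mk_bool, Cardinal.mk_nat, Cardinal.lift_id, Cardinal.lift_id,
    Cardinal.two_power_aleph0]

/-- If `ℵ₁ ≤ κ ≤ 𝔠` and `X ⊆ 𝒫(ℕ)` is `κ`-concentrated on `Fin`, then the
subspace `X` of the Cantor space is not σ-compact. -/
theorem stmt11 (κ : Cardinal) (h1 : Cardinal.aleph 1 ≤ κ) (h2 : κ ≤ Cardinal.continuum)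
    (X : Set CantorSp) (hX : KappaConcentrated κ X) :
    ¬ SigmaCompactSpace ↥X := by
  intro hsc
  obtain ⟨hκX, hconc⟩ := hX
  set K : ℕ → Set CantorSp := fun n => Subtype.val '' compactCovering (↥X) n with hKdef
  have hKc : ∀ n, IsCompact (K n) :=
    fun n => (isCompact_compactCovering _ n).image continuous_subtype_val
  have hKX : ∀ n, K n ⊆ X := fun n => Subtype.coe_image_subset _ _
  have hXK : X ⊆ ⋃ n, K n := by
    intro x hx
    obtain ⟨n, hn⟩ := iUnion_eq_univ_iff.mp (iUnion_compactCovering (↥X)) ⟨x, hx⟩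
    exact Set.mem_iUnion.2 ⟨n, ⟨x, hx⟩, hn, rfl⟩
  have huncnt : ∃ n, ¬ (K n).Countable := by
    by_contra hcnt
    push_neg at hcnt
    have hXc : X.Countable := (Set.countable_iUnion hcnt).mono hXK
    have : #X ≤ ℵ₀ := hXc.le_aleph0
    have h01 : (ℵ₀ : Cardinal) < Cardinal.aleph 1 := by
      simpa using Cardinal.aleph_lt_aleph.mpr (zero_lt_one)
    exact absurd (h1.trans hκX) (not_le.mpr (lt_of_le_of_lt this h01))
  obtain ⟨n, hn⟩ := huncnt
  haveI : PolishSpace CantorSp := { }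
  obtain ⟨f, hfK, hfc, hfi⟩ :=
    (hKc n).isClosed.exists_nat_bool_injection_of_not_countable hn
  -- enumerate the countable preimage of CFin
  have hScnt : (f ⁻¹' CFin).Countable := cfin_countable.preimage hfi
  obtain ⟨e, hSe⟩ : ∃ e : ℕ → CantorSp, f ⁻¹' CFin ⊆ Set.range e := by
    rcases Set.eq_empty_or_nonempty (f ⁻¹' CFin) with h | h
    · exact ⟨fun _ => (fun _ => false), by simp [h]⟩
    · obtain ⟨e, he⟩ := hScnt.exists_eq_range h
      exact ⟨e, he.le⟩
  obtain ⟨g, hgc, hgi, hgav⟩ := avoid e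
  set C : Set CantorSp := Set.range (f ∘ g) with hC
  have hCcomp : IsCompact C := isCompact_range (hfc.comp hgc)
  have hCX : C ⊆ X := by
    rintro _ ⟨y, rfl⟩
    exact hKX n (hfK ⟨g y, rfl⟩)
  have hCFin : ∀ y, f (g y) ∉ CFin := by
    intro y hy
    obtain ⟨m, hm⟩ := hSe hy
    exact hgav y m hm.symm
  have hU : IsOpen Cᶜ := hCcomp.isClosed.isOpen_compl
  have hUF : CFin ⊆ Cᶜ := by
    rintro x hx ⟨y, rfl⟩
    exact hCFin y hx
  have hCsub : C ⊆ X \ Cᶜ := fun x hx => ⟨hCX hx, fun h => h hx⟩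
  have hCcard : Cardinal.continuum ≤ #C := by
    rw [hC, Cardinal.mk_range_eq _ (hfi.comp hgi), mk_nat_bool]
  have : κ ≤ #(X \ Cᶜ : Set CantorSp) :=
    h2.trans (hCcard.trans (Cardinal.mk_le_mk_of_subset hCsub))
  exact absurd (hconc Cᶜ hU hUF) (not_lt.mpr this)
end
end OmissionOfIntervals
end

section
/- No Hausdorff topological space satisfying S1(Γ,O) contains a subspace homeomorphic to the Cantor space 2^ℕ. In particular, the Cantor space 2^ℕ does not satisfy S1(Γ,O). -/
open Set Filter Cardinal

namespace OmissionOfIntervals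

/-- Auxiliary cover members used to refute `S1GammaO CantorSp`. -/
def Ucov (n k : ℕ) : Set CantorSp :=
  {x | x (Nat.pair n k) = false} ∪ ⋃ j < k, {x | x (Nat.pair n j) = true}

lemma isOpen_coord (c : ℕ) (b : Bool) : IsOpen {x : CantorSp | x c = b} := by
  have : {x : CantorSp | x c = b} = (fun x : CantorSp => x c) ⁻¹' {b} := by ext x; simp
  rw [this]
  exact (continuous_apply c).isOpen_preimage _ (isOpen_discrete _)

lemma ucov_open (n k : ℕ) : IsOpen (Ucov n k) := by
  apply IsOpen.union
  · exact isOpen_coord _ false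
  · exact isOpen_iUnion fun j => isOpen_iUnion fun _ => isOpen_coord _ true

lemma ucov_ne {n : ℕ} {k k' : ℕ} (hlt : k < k') : Ucov n k ≠ Ucov n k' := by
  intro h
  have hx : (fun m => decide (m = Nat.pair n k)) ∈ Ucov n k' := by
    refine Or.inr ?_
    refine mem_iUnion.2 ⟨k, mem_iUnion.2 ⟨hlt, ?_⟩⟩
    simp
  rw [← h] at hx
  rcases hx with hx | hx
  · simp at hx
  · rcases mem_iUnion.1 hx with ⟨j, hj⟩
    rcases mem_iUnion.1 hj with ⟨hjk, hj⟩
    simp only [mem_setOf_eq, decide_eq_true_eq] at hj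
    have := Nat.pair_eq_pair.1 hj
    omega

lemma ucov_inj (n : ℕ) : Function.Injective (Ucov n) := by
  intro k k' h
  rcases lt_trichotomy k k' with hl | he | hl
  · exact absurd h (ucov_ne hl)
  · exact he
  · exact absurd h.symm (ucov_ne hl)

lemma notS1Cantor : ¬ S1GammaO CantorSp := by
  intro h
  have hpcc : ∀ n, PointCofiniteCover (Set.range (Ucov n)) := by
    intro n
    refine ⟨?_, ?_, ?_⟩
    · rintro _ ⟨k, rfl⟩; exact ucov_open n k
    · exact Set.infinite_range_of_injective (ucov_inj n)
    · intro x
      by_cases hex : ∃ j, x (Nat.pair n j) = true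
      · obtain ⟨j0, hj0⟩ := hex
        have hsub : {V ∈ Set.range (Ucov n) | x ∉ V} ⊆ Ucov n '' (Set.Iic j0) := by
          rintro _ ⟨⟨k, rfl⟩, hx⟩
          refine ⟨k, ?_, rfl⟩
          by_contra hk
          exact hx (Or.inr (mem_iUnion.2 ⟨j0, mem_iUnion.2 ⟨by simpa using hk, hj0⟩⟩))
        exact ((Set.finite_Iic j0).image _).subset hsub
      · push_neg at hex
        have hemp : {V ∈ Set.range (Ucov n) | x ∉ V} = ∅ := by
          ext V
          simp only [mem_setOf_eq, mem_empty_iff_false, iff_false, not_and]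
          rintro ⟨k, rfl⟩ hx
          exact hx (Or.inl (by simpa using hex k))
        exact hemp ▸ Set.finite_empty
  obtain ⟨U, hU, hcov⟩ := h (fun n => Set.range (Ucov n)) hpcc
  choose k hk using fun n => hU n
  set x : CantorSp := fun m => decide ((Nat.unpair m).2 = k (Nat.unpair m).1) with hxdef
  have hx : x ∈ ⋃ n, U n := hcov ▸ mem_univ x
  rcases mem_iUnion.1 hx with ⟨n, hn⟩
  rw [← hk n] at hn
  rcases hn with hn | hn
  · simp [hxdef, Nat.unpair_pair] at hn
  · rcases mem_iUnion.1 hn with ⟨j, hj⟩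
    rcases mem_iUnion.1 hj with ⟨hjk, hj⟩
    simp only [mem_setOf_eq, hxdef, Nat.unpair_pair, decide_eq_true_eq] at hj
    omega

lemma s1_of_surj {X Y : Type*} [TopologicalSpace X] [TopologicalSpace Y]
    (f : X → Y) (hc : Continuous f) (hs : Function.Surjective f)
    (h : S1GammaO X) : S1GammaO Y := by
  intro 𝒰 h𝒰
  have hpcc : ∀ n, PointCofiniteCover ((fun U => f ⁻¹' U) '' 𝒰 n) := by
    intro n
    obtain ⟨hop, hinf, hpc⟩ := h𝒰 n
    refine ⟨?_, ?_, ?_⟩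
    · rintro _ ⟨U, hU, rfl⟩; exact (hop U hU).preimage hc
    · exact hinf.image (((Set.preimage_injective).2 hs).injOn)
    · intro x
      have hsub : {V ∈ (fun U => f ⁻¹' U) '' 𝒰 n | x ∉ V} ⊆
          (fun U => f ⁻¹' U) '' {U ∈ 𝒰 n | f x ∉ U} := by
        rintro _ ⟨⟨U, hU, rfl⟩, hx⟩
        exact ⟨U, ⟨hU, hx⟩, rfl⟩
      exact ((hpc (f x)).image _).subset hsub
  obtain ⟨V, hV, hcov⟩ := h (fun n => (fun U => f ⁻¹' U) '' 𝒰 n) hpcc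
  choose U' hU' hU'eq using fun n => hV n
  refine ⟨U', hU', ?_⟩
  apply eq_univ_of_forall
  intro y
  obtain ⟨x, rfl⟩ := hs y
  have hx : x ∈ ⋃ n, V n := hcov ▸ mem_univ x
  rcases mem_iUnion.1 hx with ⟨n, hn⟩
  rw [← hU'eq n] at hn
  exact mem_iUnion.2 ⟨n, hn⟩

lemma s1_closed {X : Type*} [TopologicalSpace X] (h : S1GammaO X)
    (Y : Set X) (hY : IsClosed Y) : S1GammaO ↥Y := by
  intro 𝒱 h𝒱
  have hWex : ∀ V : Set ↥Y, ∃ W : Set X,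
      IsOpen V → IsOpen W ∧ V = (Subtype.val : ↥Y → X) ⁻¹' W := by
    intro V
    by_cases hV : IsOpen V
    · obtain ⟨W, hWo, hWeq⟩ := isOpen_induced_iff.1 hV
      exact ⟨W, fun _ => ⟨hWo, hWeq.symm⟩⟩
    · exact ⟨∅, fun hc => absurd hc hV⟩
  choose W hWspec using hWex
  set E : Set ↥Y → Set X := fun V => W V ∪ Yᶜ with hE
  have hpre : ∀ (n : ℕ), ∀ V ∈ 𝒱 n, (Subtype.val : ↥Y → X) ⁻¹' (E V) = V := by
    intro n V hV
    have hVo := (h𝒱 n).1 V hV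
    have hYc : (Subtype.val : ↥Y → X) ⁻¹' Yᶜ = (∅ : Set ↥Y) := by
      ext y; simp [y.2]
    simp [hE, Set.preimage_union, hYc, ← (hWspec V hVo).2]
  have hpcc : ∀ n, PointCofiniteCover (E '' 𝒱 n) := by
    intro n
    obtain ⟨hop, hinf, hpc⟩ := h𝒱 n
    refine ⟨?_, ?_, ?_⟩
    · rintro _ ⟨V, hV, rfl⟩
      exact ((hWspec V (hop V hV)).1).union hY.isOpen_compl
    · refine hinf.image ?_
      intro V1 h1 V2 h2 heq
      have h2' := congrArg (fun S => (Subtype.val : ↥Y → X) ⁻¹' S) heq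
      simpa [hpre n V1 h1, hpre n V2 h2] using h2'
    · intro x
      by_cases hx : x ∈ Y
      · have hsub : {U ∈ E '' 𝒱 n | x ∉ U} ⊆ E '' {V ∈ 𝒱 n | (⟨x, hx⟩ : ↥Y) ∉ V} := by
          rintro _ ⟨⟨V, hV, rfl⟩, hxU⟩
          refine ⟨V, ⟨hV, fun hmem => hxU ?_⟩, rfl⟩
          have hm : (⟨x, hx⟩ : ↥Y) ∈ (Subtype.val : ↥Y → X) ⁻¹' (E V) := by
            rw [hpre n V hV]; exact hmem
          exact hm
        exact ((hpc ⟨x, hx⟩).image _).subset hsub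
      · have hemp : {U ∈ E '' 𝒱 n | x ∉ U} = ∅ := by
          ext U
          simp only [mem_setOf_eq, mem_empty_iff_false, iff_false, not_and]
          rintro ⟨V, hV, rfl⟩ hxU
          exact hxU (Or.inr hx)
        exact hemp ▸ Set.finite_empty
  obtain ⟨U', hU', hcov⟩ := h (fun n => E '' 𝒱 n) hpcc
  choose V' hV' hV'eq using fun n => hU' n
  refine ⟨V', hV', ?_⟩
  apply eq_univ_of_forall
  intro y
  have hy : y.1 ∈ ⋃ n, U' n := hcov ▸ mem_univ _
  rcases mem_iUnion.1 hy with ⟨n, hn⟩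
  rw [← hV'eq n] at hn
  refine mem_iUnion.2 ⟨n, ?_⟩
  rw [← hpre n (V' n) (hV' n)]
  exact hn

lemma keyX (X : Type*) [TopologicalSpace X] [T2Space X] (hX : S1GammaO X)
    (Y : Set X) : ¬ Nonempty (↥Y ≃ₜ CantorSp) := by
  rintro ⟨e⟩
  have hcs : CompactSpace ↥Y := e.symm.compactSpace
  have hYc : IsClosed Y := (isCompact_iff_compactSpace.2 hcs).isClosed
  exact notS1Cantor (s1_of_surj e e.continuous e.surjective (s1_closed hX Y hYc))

/-- No Hausdorff space satisfying `S1(Γ,O)` contains a subspace homeomorphic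
to the Cantor space; in particular, the Cantor space does not satisfy `S1(Γ,O)`. -/
theorem stmt12 :
    (∀ (X : Type*) [TopologicalSpace X] [T2Space X], S1GammaO X →
      ∀ Y : Set X, ¬ Nonempty (↥Y ≃ₜ CantorSp)) ∧
    ¬ S1GammaO CantorSp := by
  refine ⟨fun X _ _ hX Y => keyX X hX Y, fun h => ?_⟩
  exact keyX CantorSp h Set.univ ⟨Homeomorph.Set.univ CantorSp⟩
end OmissionOfIntervals
end
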